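/- arXiv:0712.3902 — 3 statements merged into one kernel-verified Lean document; each statement's English description precedes it below -/
import Mathlib

section
/- Let q ∈ ℝ with q^i ≠ 1 for all integers i ≥ 1, let a ∈ ℝ, and let m, n ∈ ℕ. Then the Rogers–Szegő polynomials satisfy the convolution identity h_{m+n}(a;q) = Σ_{j=0}^{min(m,n)} q^{j(j-1)/2} (-a)^j (q;q)_j · [m choose j]_q · [n choose j]_q · h_{m-j}(a;q) · h_{n-j}(a;q). (This is the coefficient form of the non-commutative addition formula 1/((t+s;q)_∞ (a(t+s);q)_∞) = Σ_j (-a)^j q^{j(j-1)/2} (q;q)_j · t^j/((q;q)_j (t;q)_∞ (at;q)_∞) · s^j/((q;q)_j (s;q)_∞ (as;q)_∞) for variables with s t = q t s.) -/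
noncomputable def qpoch (a q : ℝ) (n : ℕ) : ℝ := ∏ i ∈ Finset.range n, (1 - a * q ^ i)
noncomputable def qbinom (n k : ℕ) (q : ℝ) : ℝ :=
  qpoch q q n / (qpoch q q k * qpoch q q (n - k))
noncomputable def rogersSzego (n : ℕ) (a q : ℝ) : ℝ :=
  ∑ k ∈ Finset.range (n + 1), qbinom n k q * a ^ k

noncomputable def B (q : ℝ) (n k : ℕ) : ℝ := if k ≤ n then qbinom n k q else 0
lemma qpoch_succ (a q : ℝ) (n : ℕ) : qpoch a q (n+1) = qpoch a q n * (1 - a * q ^ n) :=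
  Finset.prod_range_succ _ _
lemma qpoch_zero (a q : ℝ) : qpoch a q 0 = 1 := Finset.prod_range_zero _
lemma B_eq {q : ℝ} {n k : ℕ} (h : k ≤ n) : B q n k = qbinom n k q := if_pos h
lemma B_lt {q : ℝ} {n k : ℕ} (h : n < k) : B q n k = 0 := if_neg (by omega)
section
variable {q : ℝ} (hq : ∀ i : ℕ, 1 ≤ i → q ^ i ≠ 1)
include hq
lemma qp_ne (n : ℕ) : qpoch q q n ≠ 0 := by
  induction n with
  | zero => simp [qpoch_zero]
  | succ n ih =>
    rw [qpoch_succ]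
    refine mul_ne_zero ih ?_
    intro h
    exact hq (n+1) (by omega) (by rw [pow_succ']; linarith)
lemma B_zero (n : ℕ) : B q n 0 = 1 := by
  rw [B_eq (Nat.zero_le _)]
  unfold qbinom
  rw [qpoch_zero, Nat.sub_zero, one_mul, div_self (qp_ne hq n)]
lemma B_self (n : ℕ) : B q n n = 1 := by
  rw [B_eq le_rfl]
  unfold qbinom
  rw [Nat.sub_self, qpoch_zero, mul_one, div_self (qp_ne hq n)]

lemma pascal (N k : ℕ) :
    B q (N+1) (k+1) = q^(k+1) * B q N (k+1) + B q N k := by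
  rcases lt_trichotomy k N with h | rfl | h
  · -- k < N
    obtain ⟨d, rfl⟩ : ∃ d, N = k + 1 + d := ⟨N - (k+1), by omega⟩
    rw [B_eq (by omega), B_eq (by omega), B_eq (by omega)]
    unfold qbinom
    have e1 : k + 1 + d + 1 - (k + 1) = d + 1 := by omega
    have e2 : k + 1 + d - (k + 1) = d := by omega
    have e3 : k + 1 + d - k = d + 1 := by omega
    rw [e1, e2, e3]
    have h1 : qpoch q q (k+1+d+1) = qpoch q q (k+1+d) * (1 - q * q ^ (k+1+d)) := qpoch_succ _ _ _
    have h2 : qpoch q q (k+1) = qpoch q q k * (1 - q * q ^ k) := qpoch_succ _ _ _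
    have h3 : qpoch q q (d+1) = qpoch q q d * (1 - q * q ^ d) := qpoch_succ _ _ _
    rw [h1, h2, h3]
    have nk := qp_ne hq k
    have nd := qp_ne hq d
    have nkd := qp_ne hq (k+1+d)
    have nk1 : (1 - q * q ^ k) ≠ 0 := by
      intro h; exact hq (k+1) (by omega) (by rw [pow_succ']; linarith)
    have nd1 : (1 - q * q ^ d) ≠ 0 := by
      intro h; exact hq (d+1) (by omega) (by rw [pow_succ']; linarith)
    field_simp
    ring
  · -- k = N
    rw [B_self hq, B_self hq, B_lt (by omega), mul_zero, zero_add]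
  · -- N < k
    rw [B_lt (by omega), B_lt (by omega), B_lt (by omega), mul_zero, zero_add]

lemma lemS (v j : ℕ) :
    qpoch q q (j+1) * B q v (j+1) = (1 - q ^ (v - j)) * (qpoch q q j * B q v j) := by
  rcases lt_trichotomy j v with h | rfl | h
  · obtain ⟨d, rfl⟩ : ∃ d, v = j + 1 + d := ⟨v - (j+1), by omega⟩
    rw [B_eq (by omega), B_eq (by omega)]
    unfold qbinom
    have e1 : j + 1 + d - (j + 1) = d := by omega
    have e2 : j + 1 + d - j = d + 1 := by omega
    rw [e1, e2]
    have h1 : qpoch q q (j+1) = qpoch q q j * (1 - q * q ^ j) := qpoch_succ _ _ _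
    have h3 : qpoch q q (d+1) = qpoch q q d * (1 - q * q ^ d) := qpoch_succ _ _ _
    rw [h1, h3]
    have nj := qp_ne hq j
    have nd := qp_ne hq d
    have njd := qp_ne hq (j+1+d)
    have nj1 : (1 - q * q ^ j) ≠ 0 := by
      intro h; exact hq (j+1) (by omega) (by rw [pow_succ']; linarith)
    have nd1 : (1 - q * q ^ d) ≠ 0 := by
      intro h; exact hq (d+1) (by omega) (by rw [pow_succ']; linarith)
    have hp : q ^ (d + 1) = q * q ^ d := by rw [pow_succ']
    rw [hp]
    field_simp
  · rw [B_lt (by omega), Nat.sub_self, pow_zero, sub_self, zero_mul, mul_zero]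
  · rw [B_lt (by omega), B_lt (by omega), mul_zero, mul_zero, mul_zero]
end

noncomputable def Cc (q : ℝ) (j : ℕ) : ℝ := (-1)^j * q^(j*(j-1)/2) * qpoch q q j

lemma tri_nat (j : ℕ) : (j+1)*j/2 = j*(j-1)/2 + j := by
  rcases Nat.eq_zero_or_pos j with rfl | hj
  · simp
  obtain ⟨i, rfl⟩ : ∃ i, j = i + 1 := ⟨j-1, by omega⟩
  obtain ⟨t, ht⟩ := Nat.even_mul_succ_self i
  have h1 : (i+1+1)*(i+1) = i*(i+1) + 2*(i+1) := by ring
  have h2 : (i+1)*((i+1)-1) = i*(i+1) := by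
    simp only [Nat.add_sub_cancel]; ring
  omega

lemma Cc_zero (q : ℝ) : Cc q 0 = 1 := by simp [Cc, qpoch_zero]

section
variable {q : ℝ} (hq : ∀ i : ℕ, 1 ≤ i → q ^ i ≠ 1)
include hq

lemma C_succ_B (v j : ℕ) :
    Cc q (j+1) * B q v (j+1) = (q^v - q^j) * (Cc q j * B q v j) := by
  unfold Cc
  have he : q ^ ((j+1)*((j+1)-1)/2) = q ^ (j*(j-1)/2) * q ^ j := by
    rw [← pow_add]
    congr 1
    simpa using tri_nat j
  rcases le_or_gt j v with h | h
  · have hlem := lemS hq v j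
    have hpow : q ^ j * q ^ (v - j) = q ^ v := by
      rw [← pow_add]; congr 1; omega
    calc (-1)^(j+1) * q^((j+1)*((j+1)-1)/2) * qpoch q q (j+1) * B q v (j+1)
        = (-1)^j * q^(j*(j-1)/2) * q^j * (-(qpoch q q (j+1) * B q v (j+1))) := by
          rw [he, pow_succ]; ring
      _ = (-1)^j * q^(j*(j-1)/2) * q^j * (-((1 - q^(v-j)) * (qpoch q q j * B q v j))) := by
          rw [hlem]
      _ = (q^j * q^(v-j) - q^j) * ((-1)^j * q^(j*(j-1)/2) * qpoch q q j * B q v j) := by ring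
      _ = (q^v - q^j) * ((-1)^j * q^(j*(j-1)/2) * qpoch q q j * B q v j) := by rw [hpow]
  · rw [B_lt (by omega), B_lt (by omega), mul_zero, mul_zero, mul_zero]

lemma lemmaA (u : ℕ) : ∀ v : ℕ,
    q ^ (u*v) = ∑ j ∈ Finset.range (v+1), Cc q j * B q u j * B q v j := by
  induction u with
  | zero =>
    intro v
    rw [Finset.sum_range_succ']
    have h0 : Cc q 0 * B q 0 0 * B q v 0 = 1 := by
      rw [Cc_zero, B_zero hq, B_zero hq]; ring
    have hrest : ∑ j ∈ Finset.range v, Cc q (j+1) * B q 0 (j+1) * B q v (j+1) = 0 :=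
      Finset.sum_eq_zero fun j _ => by rw [B_lt (by omega)]; ring
    rw [h0, hrest, zero_add, zero_mul, pow_zero]
  | succ u ih =>
    intro v
    set T : ℕ → ℝ := fun j => Cc q j * B q u j * B q v j with hT
    have hsplit : ∀ j ∈ Finset.range v,
        Cc q (j+1) * B q (u+1) (j+1) * B q v (j+1)
        = Cc q (j+1) * B q u (j+1) * B q v (j+1) * q ^ (j+1) + (q^v - q^j) * T j := by
      intro j _
      rw [pascal hq, hT]
      have h2' : Cc q (j+1) * B q u j * B q v (j+1)
          = (q^v - q^j) * (Cc q j * B q u j * B q v j) := by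
        have := C_succ_B hq v j
        calc Cc q (j+1) * B q u j * B q v (j+1)
            = (Cc q (j+1) * B q v (j+1)) * B q u j := by ring
          _ = ((q^v - q^j) * (Cc q j * B q v j)) * B q u j := by rw [this]
          _ = (q^v - q^j) * (Cc q j * B q u j * B q v j) := by ring
      calc Cc q (j+1) * (q ^ (j+1) * B q u (j+1) + B q u j) * B q v (j+1)
          = Cc q (j+1) * B q u (j+1) * B q v (j+1) * q^(j+1)
            + Cc q (j+1) * B q u j * B q v (j+1) := by ring
        _ = _ := by rw [h2']
    have key : ∑ j ∈ Finset.range (v+1), Cc q j * B q (u+1) j * B q v j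
        = (∑ j ∈ Finset.range (v+1), T j * q ^ j)
          + ∑ j ∈ Finset.range (v+1), (q^v - q^j) * T j := by
      rw [Finset.sum_range_succ' (fun j => Cc q j * B q (u+1) j * B q v j),
          Finset.sum_congr rfl hsplit, Finset.sum_add_distrib]
      have hA0 : Cc q 0 * B q (u+1) 0 * B q v 0 = T 0 * q ^ 0 := by
        simp only [hT, B_zero hq, pow_zero]; ring
      have hQtop : (q^v - q^v) * T v = 0 := by ring
      rw [Finset.sum_range_succ (fun j => (q^v - q^j) * T j), hQtop, add_zero,
          Finset.sum_range_succ' (fun j => T j * q ^ j), hA0]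
      have : ∀ j ∈ Finset.range v,
          Cc q (j+1) * B q u (j+1) * B q v (j+1) * q ^ (j+1) = T (j+1) * q ^ (j+1) := by
        intro j _; rw [hT]
      rw [Finset.sum_congr rfl this]
      ring
    rw [key, ← Finset.sum_add_distrib]
    have hcomb : ∀ j ∈ Finset.range (v+1), T j * q ^ j + (q^v - q^j) * T j = q^v * T j :=
      fun j _ => by ring
    rw [Finset.sum_congr rfl hcomb, ← Finset.mul_sum, ← ih v, ← pow_add]
    congr 1
    ring

lemma G_succ (N : ℕ) (a : ℝ) :
    ∑ k ∈ Finset.range (N+1+1), B q (N+1) k * a^k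
    = (∑ k ∈ Finset.range (N+1), B q N k * (q*a)^k)
      + a * ∑ k ∈ Finset.range (N+1), B q N k * a^k := by
  rw [Finset.sum_range_succ' (fun k => B q (N+1) k * a^k)]
  have hpt : ∀ k ∈ Finset.range (N+1),
      B q (N+1) (k+1) * a^(k+1) = B q N (k+1) * (q*a)^(k+1) + a * (B q N k * a^k) := by
    intro k _
    rw [pascal hq, mul_pow]
    ring
  rw [Finset.sum_congr rfl hpt, Finset.sum_add_distrib, ← Finset.mul_sum]
  have h1 : (∑ k ∈ Finset.range (N+1), B q N (k+1) * (q*a)^(k+1)) + B q (N+1) 0 * a^0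
      = ∑ k ∈ Finset.range (N+1), B q N k * (q*a)^k := by
    rw [Finset.sum_range_succ (fun k => B q N (k+1) * (q*a)^(k+1)), B_lt (by omega), zero_mul,
        add_zero, Finset.sum_range_succ' (fun k => B q N k * (q*a)^k), B_zero hq, B_zero hq]
    norm_num
  calc (∑ k ∈ Finset.range (N+1), B q N (k+1) * (q*a)^(k+1))
        + a * (∑ k ∈ Finset.range (N+1), B q N k * a^k) + B q (N+1) 0 * a^0
      = ((∑ k ∈ Finset.range (N+1), B q N (k+1) * (q*a)^(k+1)) + B q (N+1) 0 * a^0)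
        + a * (∑ k ∈ Finset.range (N+1), B q N k * a^k) := by ring
    _ = _ := by rw [h1]

lemma lemmaV (n : ℕ) : ∀ (m : ℕ) (a : ℝ),
    ∑ k ∈ Finset.range (m+n+1), B q (m+n) k * a^k
    = ∑ u ∈ Finset.range (m+1), ∑ v ∈ Finset.range (n+1),
        B q m u * B q n v * q^((m-u)*v) * a^(u+v) := by
  intro m
  induction m with
  | zero =>
    intro a
    simp only [Nat.zero_add]
    rw [Finset.sum_range_one]
    refine Finset.sum_congr rfl fun v _ => ?_
    rw [B_zero hq]
    norm_num
  | succ m ih =>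
    intro a
    have e1 : m + 1 + n = m + n + 1 := by omega
    rw [e1, G_succ hq (m+n) a, ih (q*a), ih a]
    rw [Finset.sum_range_succ'
      (fun u => ∑ v ∈ Finset.range (n+1), B q (m+1) u * B q n v * q^((m+1-u)*v) * a^(u+v))]
    have hFu : ∀ u ∈ Finset.range (m+1),
        (∑ v ∈ Finset.range (n+1), B q (m+1) (u+1) * B q n v * q^((m+1-(u+1))*v) * a^(u+1+v))
        = (∑ v ∈ Finset.range (n+1), B q m (u+1) * B q n v * (q^(u+1) * q^((m-u)*v)) * a^(u+1+v))
          + a * ∑ v ∈ Finset.range (n+1), B q m u * B q n v * q^((m-u)*v) * a^(u+v) := by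
      intro u _
      rw [Finset.mul_sum, ← Finset.sum_add_distrib]
      refine Finset.sum_congr rfl fun v _ => ?_
      have e2 : m + 1 - (u+1) = m - u := by omega
      rw [e2, pascal hq]
      ring
    rw [Finset.sum_congr rfl hFu, Finset.sum_add_distrib, ← Finset.mul_sum]
    have hfirst :
        (∑ u ∈ Finset.range (m+1), ∑ v ∈ Finset.range (n+1),
            B q m (u+1) * B q n v * (q^(u+1) * q^((m-u)*v)) * a^(u+1+v))
          + (∑ v ∈ Finset.range (n+1), B q (m+1) 0 * B q n v * q^((m+1-0)*v) * a^(0+v))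
        = ∑ u ∈ Finset.range (m+1), ∑ v ∈ Finset.range (n+1),
            B q m u * B q n v * q^((m-u)*v) * (q*a)^(u+v) := by
      rw [Finset.sum_range_succ
            (fun u => ∑ v ∈ Finset.range (n+1), B q m (u+1) * B q n v * (q^(u+1) * q^((m-u)*v)) * a^(u+1+v)),
          Finset.sum_range_succ'
            (fun u => ∑ v ∈ Finset.range (n+1), B q m u * B q n v * q^((m-u)*v) * (q*a)^(u+v))]
      have htop : (∑ v ∈ Finset.range (n+1), B q m (m+1) * B q n v * (q^(m+1) * q^((m-m)*v)) * a^(m+1+v)) = 0 :=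
        Finset.sum_eq_zero fun v _ => by rw [B_lt (by omega)]; ring
      have hmid : ∀ u ∈ Finset.range m,
          (∑ v ∈ Finset.range (n+1), B q m (u+1) * B q n v * (q^(u+1) * q^((m-u)*v)) * a^(u+1+v))
          = ∑ v ∈ Finset.range (n+1), B q m (u+1) * B q n v * q^((m-(u+1))*v) * (q*a)^(u+1+v) := by
        intro u hu
        refine Finset.sum_congr rfl fun v _ => ?_
        have e3 : (m-u)*v = (m-(u+1))*v + v := by
          have : m - u = (m-(u+1)) + 1 := by
            simp only [Finset.mem_range] at hu; omega
          rw [this]; ring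
        rw [e3, pow_add, mul_pow]
        ring
      have hzero : (∑ v ∈ Finset.range (n+1), B q (m+1) 0 * B q n v * q^((m+1-0)*v) * a^(0+v))
          = ∑ v ∈ Finset.range (n+1), B q m 0 * B q n v * q^((m-0)*v) * (q*a)^(0+v) := by
        refine Finset.sum_congr rfl fun v _ => ?_
        rw [B_zero hq, B_zero hq]
        have e4 : (m+1-0)*v = (m-0)*v + v := by simp; ring
        rw [e4, pow_add, mul_pow]
        ring
      rw [htop, add_zero, Finset.sum_congr rfl hmid, hzero]
    calc (∑ u ∈ Finset.range (m+1), ∑ v ∈ Finset.range (n+1),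
            B q m u * B q n v * q^((m-u)*v) * (q*a)^(u+v))
          + a * ∑ u ∈ Finset.range (m+1), ∑ v ∈ Finset.range (n+1),
              B q m u * B q n v * q^((m-u)*v) * a^(u+v)
        = _ := by rw [← hfirst]; ring

lemma T1 (m u j : ℕ) : B q m u * B q (m-u) j = B q m j * B q (m-j) u := by
  rcases le_or_gt u m with hu | hu
  · rcases le_or_gt j m with hj | hj
    · rcases le_or_gt (u+j) m with hm | hm
      · obtain ⟨d, rfl⟩ : ∃ d, m = u + j + d := ⟨m - (u+j), by omega⟩
        rw [B_eq (by omega), B_eq (by omega), B_eq (by omega), B_eq (by omega)]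
        unfold qbinom
        have e1 : u + j + d - u = j + d := by omega
        have e2 : j + d - j = d := by omega
        have e3 : u + j + d - j = u + d := by omega
        have e4 : u + d - u = d := by omega
        rw [e1, e2, e3, e4]
        have h1 := qp_ne hq u
        have h2 := qp_ne hq j
        have h3 := qp_ne hq d
        have h4 := qp_ne hq (j+d)
        have h5 := qp_ne hq (u+d)
        have h6 := qp_ne hq (u+j+d)
        field_simp
      · rw [B_lt (show m - u < j by omega), B_lt (show m - j < u by omega), mul_zero, mul_zero]
    · rw [B_lt (show m < j by omega)]
      rw [B_lt (show m - u < j by omega)]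
      ring
  · rw [B_lt hu, B_lt (show m - j < u by omega)]
    ring

lemma T2 (n v j : ℕ) (hjv : j ≤ v) :
    B q n v * B q v j = B q n j * B q (n-j) (v-j) := by
  rcases le_or_gt v n with hv | hv
  · obtain ⟨s, rfl⟩ : ∃ s, v = j + s := ⟨v - j, by omega⟩
    obtain ⟨d, rfl⟩ : ∃ d, n = j + s + d := ⟨n - (j+s), by omega⟩
    rw [B_eq (by omega), B_eq (by omega), B_eq (by omega), B_eq (by omega)]
    unfold qbinom
    have e1 : j + s + d - (j + s) = d := by omega
    have e2 : j + s - j = s := by omega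
    have e3 : j + s + d - j = s + d := by omega
    have e4 : s + d - s = d := by omega
    rw [e1, e2, e3, e4]
    have h1 := qp_ne hq j
    have h2 := qp_ne hq s
    have h3 := qp_ne hq d
    have h4 := qp_ne hq (j+s)
    have h5 := qp_ne hq (s+d)
    have h6 := qp_ne hq (j+s+d)
    field_simp
  · rcases le_or_gt j n with hj | hj
    · rw [B_lt hv, B_lt (show n - j < v - j by omega), zero_mul, mul_zero]
    · rw [B_lt hv, B_lt hj]
      ring
end

lemma sum_triangle (f : ℕ → ℕ → ℝ) : ∀ N : ℕ,
    ∑ v ∈ Finset.range (N+1), ∑ j ∈ Finset.range (v+1), f v j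
    = ∑ j ∈ Finset.range (N+1), ∑ s ∈ Finset.range (N+1-j), f (j+s) j := by
  intro N
  induction N with
  | zero => simp
  | succ N ih =>
    rw [Finset.sum_range_succ (fun v => ∑ j ∈ Finset.range (v+1), f v j), ih]
    rw [Finset.sum_range_succ
      (fun j => ∑ s ∈ Finset.range (N+1+1-j), f (j+s) j)]
    have htop : ∑ s ∈ Finset.range (N+1+1-(N+1)), f (N+1+s) (N+1) = f (N+1) (N+1) := by
      have e : N+1+1-(N+1) = 1 := by omega
      rw [e, Finset.sum_range_one]
    have hmid : ∀ j ∈ Finset.range (N+1),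
        (∑ s ∈ Finset.range (N+1+1-j), f (j+s) j)
        = (∑ s ∈ Finset.range (N+1-j), f (j+s) j) + f (N+1) j := by
      intro j hj
      simp only [Finset.mem_range] at hj
      have e : N+1+1-j = (N+1-j) + 1 := by omega
      rw [e, Finset.sum_range_succ]
      congr 2
      omega
    rw [Finset.sum_congr rfl hmid, Finset.sum_add_distrib, htop,
        Finset.sum_range_succ (fun j => f (N+1) j)]
    ring

lemma rs_eq (q a : ℝ) (N : ℕ) :
    rogersSzego N a q = ∑ k ∈ Finset.range (N+1), B q N k * a^k := by
  refine Finset.sum_congr rfl fun k hk => ?_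
  simp only [Finset.mem_range] at hk
  rw [B_eq (by omega : k ≤ N)]

/-- Convolution identity for the Rogers–Szegő polynomials (coefficient form of
the non-commutative addition formula). -/
theorem rogers_szego_convolution (q a : ℝ) (hq : ∀ i : ℕ, 1 ≤ i → q ^ i ≠ 1)
    (m n : ℕ) :
    rogersSzego (m + n) a q =
      ∑ j ∈ Finset.range (min m n + 1),
        q ^ (j * (j - 1) / 2) * (-a) ^ j * qpoch q q j *
          qbinom m j q * qbinom n j q *
          rogersSzego (m - j) a q * rogersSzego (n - j) a q := by
  -- Step 1: LHS to double sum (q-Vandermonde)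
  have h1 : rogersSzego (m+n) a q
      = ∑ u ∈ Finset.range (m+1), ∑ v ∈ Finset.range (n+1),
          B q m u * B q n v * q^((m-u)*v) * a^(u+v) := by
    rw [rs_eq]
    exact lemmaV hq n m a
  -- Step 2: expand q^((m-u)v) via lemmaA and apply trinomial revisions
  have h2 : ∀ u, ∀ v, B q m u * B q n v * q^((m-u)*v) * a^(u+v)
      = ∑ j ∈ Finset.range (v+1),
          Cc q j * (B q m j * B q (m-j) u) * (B q n j * B q (n-j) (v-j)) * a^(u+v) := by
    intro u v
    rw [lemmaA hq (m-u) v, Finset.mul_sum, Finset.sum_mul]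
    refine Finset.sum_congr rfl fun j hj => ?_
    simp only [Finset.mem_range] at hj
    have hjv : j ≤ v := by omega
    have e : (B q m u * B q n v) * (Cc q j * B q (m-u) j * B q v j) * a^(u+v)
        = Cc q j * (B q m u * B q (m-u) j) * (B q n v * B q v j) * a^(u+v) := by ring
    rw [e, T1 hq m u j, T2 hq n v j hjv]
  have h3 : rogersSzego (m+n) a q
      = ∑ v ∈ Finset.range (n+1), ∑ j ∈ Finset.range (v+1), ∑ u ∈ Finset.range (m+1),
          Cc q j * (B q m j * B q (m-j) u) * (B q n j * B q (n-j) (v-j)) * a^(u+v) := by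
    rw [h1]
    rw [Finset.sum_congr rfl (fun u _ => Finset.sum_congr rfl (fun v _ => h2 u v))]
    rw [Finset.sum_comm]
    exact Finset.sum_congr rfl fun v _ => Finset.sum_comm
  -- Step 3: triangle swap
  have h4 : rogersSzego (m+n) a q
      = ∑ j ∈ Finset.range (n+1), ∑ s ∈ Finset.range (n+1-j), ∑ u ∈ Finset.range (m+1),
          Cc q j * (B q m j * B q (m-j) u) * (B q n j * B q (n-j) ((j+s)-j)) * a^(u+(j+s)) := by
    rw [h3]
    exact sum_triangle
      (fun v j => ∑ u ∈ Finset.range (m+1),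
        Cc q j * (B q m j * B q (m-j) u) * (B q n j * B q (n-j) (v-j)) * a^(u+v)) n
  -- Step 4: trim u-range and j-range, match RHS
  rw [h4]
  symm
  rw [show (∑ j ∈ Finset.range (n+1), ∑ s ∈ Finset.range (n+1-j), ∑ u ∈ Finset.range (m+1),
          Cc q j * (B q m j * B q (m-j) u) * (B q n j * B q (n-j) ((j+s)-j)) * a^(u+(j+s)))
      = ∑ j ∈ Finset.range (min m n + 1), ∑ s ∈ Finset.range (n+1-j), ∑ u ∈ Finset.range (m+1),
          Cc q j * (B q m j * B q (m-j) u) * (B q n j * B q (n-j) ((j+s)-j)) * a^(u+(j+s))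
    from (Finset.sum_subset
      (Finset.range_subset_range.mpr (by omega))
      (by
        intro j hj hj'
        simp only [Finset.mem_range] at hj hj'
        have hmj : m < j := by omega
        refine Finset.sum_eq_zero fun s _ => Finset.sum_eq_zero fun u _ => ?_
        rw [B_lt hmj]
        ring)).symm]
  refine Finset.sum_congr rfl fun j hj => ?_
  simp only [Finset.mem_range] at hj
  have hjm : j ≤ m := by omega
  have hjn : j ≤ n := by omega
  -- trim u-range
  have h5 : ∀ s, (∑ u ∈ Finset.range (m+1),
        Cc q j * (B q m j * B q (m-j) u) * (B q n j * B q (n-j) ((j+s)-j)) * a^(u+(j+s)))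
      = ∑ u ∈ Finset.range (m-j+1),
        Cc q j * (B q m j * B q (m-j) u) * (B q n j * B q (n-j) ((j+s)-j)) * a^(u+(j+s)) := by
    intro s
    refine (Finset.sum_subset (Finset.range_subset_range.mpr (by omega)) ?_).symm
    intro u hu hu'
    simp only [Finset.mem_range] at hu hu'
    rw [B_lt (show m - j < u by omega)]
    ring
  rw [Finset.sum_congr rfl fun s _ => h5 s]
  -- expand RHS term
  rw [rs_eq q a (m-j), rs_eq q a (n-j), ← B_eq hjm, ← B_eq hjn]
  have hexp : (q ^ (j * (j - 1) / 2) * (-a) ^ j * qpoch q q j * B q m j * B q n j *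
        (∑ r ∈ Finset.range (m-j+1), B q (m-j) r * a^r)) *
        (∑ s ∈ Finset.range (n-j+1), B q (n-j) s * a^s)
      = ∑ s ∈ Finset.range (n-j+1), ∑ u ∈ Finset.range (m-j+1),
          q ^ (j * (j - 1) / 2) * (-a) ^ j * qpoch q q j * B q m j * B q n j *
            (B q (m-j) u * a^u) * (B q (n-j) s * a^s) := by
    simp only [Finset.mul_sum, Finset.sum_mul]
  rw [hexp]
  have hr : n - j + 1 = n + 1 - j := by omega
  rw [hr]
  refine Finset.sum_congr rfl fun s _ => Finset.sum_congr rfl fun u _ => ?_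
  have e1 : j + s - j = s := by omega
  rw [e1, Cc, neg_pow]
  have e2 : a^(u+(j+s)) = a^j * a^u * a^s := by
    rw [← pow_add, ← pow_add]
    congr 1
    omega
  rw [e2]
  ring
end

section
/- Let 0 < q < 1, a < 0, and y, t ∈ ℝ with |y| < 1, |a y| < 1, |t| < 1, |a t| < 1. Define f(x) = (q x;q)_∞ (q x/a;q)_∞ / ((x y;q)_∞ (x t;q)_∞). Then the series Σ_{n=0}^∞ q^n ( f(q^n) - a f(a q^n) ) converges absolutely and ((y;q)_∞ (a y;q)_∞ / ((q;q)_∞ (a;q)_∞ (q/a;q)_∞)) · Σ_{n=0}^∞ q^n ( f(q^n) - a f(a q^n) ) = (a y t;q)_∞ / ((t;q)_∞ (a t;q)_∞). (This evaluates the bilinear generating function of the Al-Salam–Carlitz functional: the left-hand side is ((y,ay;q)_∞/((1-q)(q,a,q/a;q)_∞)) ∫_a^1 (qx,qx/a;q)_∞/((xy,xt;q)_∞) d_q x, where the Jackson q-integral is ∫_a^1 g(x) d_q x = (1-q) Σ_{n≥0} q^n (g(q^n) - a g(a q^n)).) -/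
/-- The infinite q-shifted factorial `(a;q)_∞ = ∏_{i=0}^∞ (1 - a q^i)`. -/
noncomputable def qpochInf (a q : ℝ) : ℝ := ∏' i : ℕ, (1 - a * q ^ i)

open Filter Finset Real Topology

section basics
variable {q : ℝ} (hq0 : 0 < q) (hq1 : q < 1)

lemma factor_pos {c : ℝ} (hc : c < 1) (hq0 : 0 < q) (hq1 : q < 1) (i : ℕ) :
    0 < 1 - c * q ^ i := by
  rcases le_or_gt c 0 with h | h
  · nlinarith [pow_pos hq0 i, pow_le_one₀ hq0.le hq1.le (n := i)]
  · nlinarith [pow_pos hq0 i, pow_le_one₀ hq0.le hq1.le (n := i)]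

include hq0 hq1 in
lemma summable_log_qpoch {c : ℝ} (hc : c < 1) :
    Summable (fun i : ℕ => Real.log (1 - c * q ^ i)) := by
  have hgeo : Summable (fun i : ℕ => 2 * |c| * q ^ i) :=
    (summable_geometric_of_lt_one hq0.le hq1).mul_left _
  apply hgeo.of_norm_bounded_eventually
  rw [Nat.cofinite_eq_atTop]
  have h0 : Tendsto (fun i : ℕ => |c| * q ^ i) atTop (𝓝 0) := by
    simpa using (tendsto_pow_atTop_nhds_zero_of_lt_one hq0.le hq1).const_mul |c|
  filter_upwards [h0.eventually_le_const (by norm_num : (0:ℝ) < 1/2)] with i hi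
  have hpos := factor_pos hc hq0 hq1 i
  have habs : |c * q ^ i| ≤ 1/2 := by
    rwa [abs_mul, abs_pow, abs_of_pos hq0]
  have h1 : (1:ℝ)/2 ≤ 1 - c * q ^ i := by
    have := abs_le.1 habs; linarith [this.2]
  have h2 : 1 - c * q ^ i ≤ 1 + |c| * q ^ i := by
    have := abs_le.1 habs
    have : -(|c| * q ^ i) ≤ c * q ^ i := by
      have := neg_abs_le (c * q ^ i)
      rwa [abs_mul, abs_pow, abs_of_pos hq0] at this
    linarith
  rw [Real.norm_eq_abs, abs_le]
  constructor
  · have hx : (0:ℝ) < 1 - c * q ^ i := hpos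
    have hlog := Real.log_le_sub_one_of_pos (x := (1 - c * q ^ i)⁻¹) (by positivity)
    rw [Real.log_inv] at hlog
    have hu : c * q ^ i ≥ -(|c| * q ^ i) := by
      have h := neg_abs_le (c * q ^ i)
      rwa [abs_mul, abs_pow, abs_of_pos hq0] at h
    have hinv : (1 - c * q ^ i)⁻¹ ≤ 1 + 2 * (|c| * q ^ i) := by
      rw [inv_eq_one_div, div_le_iff₀ hx]
      have hub : c * q ^ i ≤ |c| * q ^ i := by
        have h := le_abs_self (c * q ^ i)
        rwa [abs_mul, abs_pow, abs_of_pos hq0] at h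
      have hnn : (0:ℝ) ≤ |c| * q ^ i := mul_nonneg (abs_nonneg c) (pow_pos hq0 i).le
      nlinarith [mul_nonneg hnn (by linarith : (0:ℝ) ≤ 1 - 2 * (|c| * q ^ i)),
        mul_nonneg (sub_nonneg.mpr hub) hnn]
    nlinarith
  · have hlog := Real.log_le_sub_one_of_pos hpos
    have hu : c * q ^ i ≥ -(|c| * q ^ i) := by
      have h := neg_abs_le (c * q ^ i)
      rwa [abs_mul, abs_pow, abs_of_pos hq0] at h
    nlinarith [mul_nonneg (abs_nonneg c) (pow_pos hq0 i).le]

include hq0 hq1 in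
lemma qpoch_hasProd {c : ℝ} (hc : c < 1) :
    HasProd (fun i : ℕ => 1 - c * q ^ i) (qpochInf c q) := by
  have := (Real.multipliable_of_summable_log (fun i => factor_pos hc hq0 hq1 i)
    (summable_log_qpoch hq0 hq1 hc)).hasProd
  exact this

include hq0 hq1 in
lemma qpoch_pos {c : ℝ} (hc : c < 1) : 0 < qpochInf c q := by
  have h2 := Real.rexp_tsum_eq_tprod (fun i => factor_pos hc hq0 hq1 i)
    (summable_log_qpoch hq0 hq1 hc)
  rw [qpochInf, ← h2]
  exact Real.exp_pos _

end basics

section structural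
variable {q : ℝ} (hq0 : 0 < q) (hq1 : q < 1)

include hq0 hq1 in
lemma qpoch_step {c : ℝ} (hc : c ≤ 1) : qpochInf c q = (1 - c) * qpochInf (c * q) q := by
  have hcq : c * q < 1 := by
    rcases le_or_gt c 0 with h | h
    · nlinarith
    · nlinarith
  have hm : Multipliable (fun n : ℕ => 1 - c * q ^ (n + 1)) :=
    (qpoch_hasProd hq0 hq1 hcq).multipliable.congr (fun n => by ring)
  rw [qpochInf, tprod_eq_zero_mul' (f := fun n : ℕ => 1 - c * q ^ n) hm, qpochInf]
  congr 1
  · norm_num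
  · exact tprod_congr fun n => by ring

include hq0 hq1 in
lemma qpoch_one : qpochInf 1 q = 0 := by
  rw [qpoch_step hq0 hq1 le_rfl]; ring

lemma qpoch_zero_s9 : qpochInf 0 q = 1 := by
  simp [qpochInf]

include hq0 hq1 in
lemma qpoch_split {c : ℝ} (hc : c < 1) (k : ℕ) :
    qpochInf c q = (∏ i ∈ Finset.range k, (1 - c * q ^ i)) * qpochInf (c * q ^ k) q := by
  induction k with
  | zero => simp
  | succ k ih =>
    have hck : c * q ^ k < 1 := by
      rcases le_or_gt c 0 with h | h
      · nlinarith [pow_pos hq0 k]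
      · nlinarith [pow_pos hq0 k, pow_le_one₀ hq0.le hq1.le (n := k)]
    rw [ih, Finset.prod_range_succ, qpoch_step hq0 hq1 hck.le]
    have : c * q ^ k * q = c * q ^ (k + 1) := by ring
    rw [this]; ring

include hq0 hq1 in
lemma qpoch_le {c c' : ℝ} (hcc : c' ≤ c) (hc : c < 1) :
    qpochInf c q ≤ qpochInf c' q := by
  have hc' : c' < 1 := lt_of_le_of_lt hcc hc
  refine le_of_tendsto_of_tendsto'
    ((qpoch_hasProd hq0 hq1 hc).tendsto_prod_nat)
    ((qpoch_hasProd hq0 hq1 hc').tendsto_prod_nat) (fun n => ?_)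
  apply Finset.prod_le_prod
  · intro i _; exact (factor_pos hc hq0 hq1 i).le
  · intro i _
    have := pow_pos hq0 i
    nlinarith

include hq0 hq1 in
lemma qpoch_tendsto_one {c : ℝ} (hc : c < 1) :
    Tendsto (fun k : ℕ => qpochInf (c * q ^ k) q) atTop (𝓝 1) := by
  have hpos : ∀ k : ℕ, (0:ℝ) < ∏ i ∈ Finset.range k, (1 - c * q ^ i) := fun k =>
    Finset.prod_pos (fun i _ => factor_pos hc hq0 hq1 i)
  have heq : ∀ k : ℕ, qpochInf (c * q ^ k) q
      = qpochInf c q / ∏ i ∈ Finset.range k, (1 - c * q ^ i) := by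
    intro k
    rw [eq_div_iff (hpos k).ne', mul_comm]
    exact (qpoch_split hq0 hq1 hc k).symm
  have h2 : Tendsto (fun k : ℕ => qpochInf c q / ∏ i ∈ Finset.range k, (1 - c * q ^ i))
      atTop (𝓝 (qpochInf c q / qpochInf c q)) :=
    tendsto_const_nhds.div ((qpoch_hasProd hq0 hq1 hc).tendsto_prod_nat)
      (qpoch_pos hq0 hq1 hc).ne'
  rw [div_self (qpoch_pos hq0 hq1 hc).ne'] at h2
  exact h2.congr (fun k => (heq k).symm)

/-- telescoping sum evaluation -/
lemma tsum_of_telescope {f u : ℕ → ℝ} {L : ℝ} (hsum : Summable f)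
    (hf : ∀ n, f n = u n - u (n + 1)) (hu : Tendsto u atTop (𝓝 L)) :
    ∑' n, f n = u 0 - L := by
  have h1 : Tendsto (fun N => ∑ n ∈ Finset.range N, f n) atTop (𝓝 (∑' n, f n)) :=
    hsum.hasSum.tendsto_sum_nat
  have h2 : ∀ N, ∑ n ∈ Finset.range N, f n = u 0 - u N := by
    intro N
    have : ∑ n ∈ Finset.range N, f n = ∑ n ∈ Finset.range N, (u n - u (n+1)) :=
      Finset.sum_congr rfl (fun n _ => hf n)
    rw [this, Finset.sum_range_sub' u]
  have h3 : Tendsto (fun N => u 0 - u N) atTop (𝓝 (u 0 - L)) :=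
    tendsto_const_nhds.sub hu
  have := h3.congr (fun N => (h2 N).symm)
  exact tendsto_nhds_unique h1 this

end structural

/-- the Al-Salam–Carlitz integrand -/
noncomputable def ascG (q a y t x : ℝ) : ℝ :=
  qpochInf (q * x) q * qpochInf (q * x / a) q /
    (qpochInf (x * y) q * qpochInf (x * t) q)

/-- summand of the Jackson q-integral -/
noncomputable def ascS (q a y t : ℝ) (n : ℕ) : ℝ :=
  q ^ n * (ascG q a y t (q ^ n) - a * ascG q a y t (a * q ^ n))

noncomputable def ascF (q a y t : ℝ) : ℝ := ∑' n : ℕ, ascS q a y t n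

noncomputable def ascPsi (q a y t x : ℝ) : ℝ :=
  qpochInf x q * qpochInf (x / a) q / (qpochInf (x * y) q * qpochInf (x * t) q)

section main
variable {q a : ℝ} (hq0 : 0 < q) (hq1 : q < 1) (ha : a < 0)

include hq0 hq1 ha in
lemma pointL3 {y t x : ℝ} (hxy : |x * y| < 1) (hxt : |x * t| < 1)
    (hx : x ≤ 1) (hxa : x / a ≤ 1) :
    ascPsi q a y t x - ascPsi q a y t (q * x)
      = (x * ((y + t - 1 - a⁻¹) + x * (a⁻¹ - y * t))) * ascG q a y t x := by
  have ha0 : a ≠ 0 := ha.ne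
  have hxy1 : x * y < 1 := (abs_lt.1 hxy).2
  have hxt1 : x * t < 1 := (abs_lt.1 hxt).2
  have hxyq : x * y * q < 1 := by
    rcases le_or_gt (x*y) 0 with h | h
    · nlinarith
    · nlinarith
  have hxtq : x * t * q < 1 := by
    rcases le_or_gt (x*t) 0 with h | h
    · nlinarith
    · nlinarith
  have hD1 : (0:ℝ) < qpochInf (x * y) q := qpoch_pos hq0 hq1 hxy1
  have hD2 : (0:ℝ) < qpochInf (x * t) q := qpoch_pos hq0 hq1 hxt1
  have hE1 : (0:ℝ) < qpochInf (x * y * q) q := qpoch_pos hq0 hq1 hxyq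
  have hE2 : (0:ℝ) < qpochInf (x * t * q) q := qpoch_pos hq0 hq1 hxtq
  have hfy : (0:ℝ) < 1 - x * y := by linarith
  have hft : (0:ℝ) < 1 - x * t := by linarith
  have s1 : qpochInf x q = (1 - x) * qpochInf (x * q) q := qpoch_step hq0 hq1 hx
  have s2 : qpochInf (x / a) q = (1 - x / a) * qpochInf (x / a * q) q :=
    qpoch_step hq0 hq1 hxa
  have s3 : qpochInf (x * y) q = (1 - x * y) * qpochInf (x * y * q) q :=
    qpoch_step hq0 hq1 hxy1.le
  have s4 : qpochInf (x * t) q = (1 - x * t) * qpochInf (x * t * q) q :=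
    qpoch_step hq0 hq1 hxt1.le
  rw [ascPsi, ascPsi, ascG]
  rw [show q * x * y = x * y * q by ring, show q * x * t = x * t * q by ring,
    show q * x / a = x / a * q by ring, show q * x = x * q by ring]
  rw [s1, s2]
  rw [s3, s4]
  field_simp
  ring
end main

section main2
variable {q a : ℝ} (hq0 : 0 < q) (hq1 : q < 1) (ha : a < 0)

include hq0 hq1 in
lemma pointQT {y t x : ℝ} (hxy : |x * y| < 1) (hxt : |x * t| < 1) :
    ascG q a y (q * t) x = (1 - x * t) * ascG q a y t x := by
  have hxy1 : x * y < 1 := (abs_lt.1 hxy).2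
  have hxt1 : x * t < 1 := (abs_lt.1 hxt).2
  have hxtq : x * t * q < 1 := by
    rcases le_or_gt (x*t) 0 with h | h
    · nlinarith
    · nlinarith
  have hD1 : (0:ℝ) < qpochInf (x * y) q := qpoch_pos hq0 hq1 hxy1
  have hD2 : (0:ℝ) < qpochInf (x * t) q := qpoch_pos hq0 hq1 hxt1
  have hE2 : (0:ℝ) < qpochInf (x * t * q) q := qpoch_pos hq0 hq1 hxtq
  have hft : (0:ℝ) < 1 - x * t := by
    have := (abs_lt.1 hxt).1; linarith
  have s4 : qpochInf (x * t) q = (1 - x * t) * qpochInf (x * t * q) q :=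
    qpoch_step hq0 hq1 hxt1.le
  rw [ascG, ascG, show x * (q * t) = x * t * q by ring, s4]
  field_simp

include hq0 hq1 ha in
lemma ascG_q_bounds {y t : ℝ} (hy : |y| < 1) (ht : |t| < 1) (n : ℕ) :
    0 < ascG q a y t (q ^ n) ∧
      ascG q a y t (q ^ n)
        ≤ qpochInf (q / a) q / (qpochInf |y| q * qpochInf |t| q) := by
  have hqn0 : (0:ℝ) < q ^ n := pow_pos hq0 n
  have hqn1 : q ^ n ≤ 1 := pow_le_one₀ hq0.le hq1.le
  have hc1lt : q * q ^ n < 1 := by nlinarith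
  have hc1nn : (0:ℝ) ≤ q * q ^ n := by positivity
  have hc2lt : q * q ^ n / a < 1 := by
    have : q * q ^ n / a < 0 := div_neg_of_pos_of_neg (by positivity) ha
    linarith
  have hc2ge : q / a ≤ q * q ^ n / a := by
    have h1 : q * q ^ n ≤ q := by nlinarith
    have h2 := mul_le_mul_of_nonpos_right h1 (inv_nonpos.mpr ha.le)
    rw [div_eq_mul_inv, div_eq_mul_inv]
    linarith
  have hd1 : q ^ n * y ≤ |y| := by
    calc q ^ n * y ≤ |q ^ n * y| := le_abs_self _
    _ = q ^ n * |y| := by rw [abs_mul, abs_of_pos hqn0]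
    _ ≤ 1 * |y| := by apply mul_le_mul_of_nonneg_right hqn1 (abs_nonneg y)
    _ = |y| := one_mul _
  have hd2 : q ^ n * t ≤ |t| := by
    calc q ^ n * t ≤ |q ^ n * t| := le_abs_self _
    _ = q ^ n * |t| := by rw [abs_mul, abs_of_pos hqn0]
    _ ≤ 1 * |t| := by apply mul_le_mul_of_nonneg_right hqn1 (abs_nonneg t)
    _ = |t| := one_mul _
  have hN1pos : 0 < qpochInf (q * q ^ n) q := qpoch_pos hq0 hq1 hc1lt
  have hN2pos : 0 < qpochInf (q * q ^ n / a) q := qpoch_pos hq0 hq1 hc2lt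
  have hD1pos : 0 < qpochInf (q ^ n * y) q :=
    qpoch_pos hq0 hq1 (lt_of_le_of_lt hd1 hy)
  have hD2pos : 0 < qpochInf (q ^ n * t) q :=
    qpoch_pos hq0 hq1 (lt_of_le_of_lt hd2 ht)
  have hYpos : 0 < qpochInf |y| q := qpoch_pos hq0 hq1 hy
  have hTpos : 0 < qpochInf |t| q := qpoch_pos hq0 hq1 ht
  have hN1le : qpochInf (q * q ^ n) q ≤ 1 := by
    have := qpoch_le hq0 hq1 hc1nn hc1lt
    rwa [qpoch_zero_s9] at this
  have hN2le : qpochInf (q * q ^ n / a) q ≤ qpochInf (q / a) q :=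
    qpoch_le hq0 hq1 hc2ge hc2lt
  have hD1ge : qpochInf |y| q ≤ qpochInf (q ^ n * y) q := qpoch_le hq0 hq1 hd1 hy
  have hD2ge : qpochInf |t| q ≤ qpochInf (q ^ n * t) q := qpoch_le hq0 hq1 hd2 ht
  constructor
  · rw [ascG]; positivity
  · rw [ascG]
    have hQApos : 0 < qpochInf (q / a) q :=
      qpoch_pos hq0 hq1 (by have : q / a < 0 := div_neg_of_pos_of_neg hq0 ha; linarith)
    apply div_le_div₀ hQApos.le
    · calc qpochInf (q * q ^ n) q * qpochInf (q * q ^ n / a) q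
          ≤ 1 * qpochInf (q / a) q :=
            mul_le_mul hN1le hN2le hN2pos.le (by norm_num)
      _ = qpochInf (q / a) q := one_mul _
    · positivity
    · exact mul_le_mul hD1ge hD2ge hTpos.le hD1pos.le

end main2

section main3
variable {q a : ℝ} (hq0 : 0 < q) (hq1 : q < 1) (ha : a < 0)

include hq0 hq1 ha in
lemma ascG_a_bounds {y t : ℝ} (hay : |a * y| < 1) (hat : |a * t| < 1) (n : ℕ) :
    0 < ascG q a y t (a * q ^ n) ∧
      ascG q a y t (a * q ^ n)
        ≤ qpochInf (a * q) q / (qpochInf |a * y| q * qpochInf |a * t| q) := by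
  have ha0 : a ≠ 0 := ha.ne
  have hqn0 : (0:ℝ) < q ^ n := pow_pos hq0 n
  have hqn1 : q ^ n ≤ 1 := pow_le_one₀ hq0.le hq1.le
  -- numerator arguments
  have e2 : q * (a * q ^ n) / a = q * q ^ n := by field_simp
  have hc1lt : q * (a * q ^ n) < 1 := by
    have := mul_neg_of_pos_of_neg hq0 (mul_neg_of_neg_of_pos ha hqn0)
    linarith
  have hc1ge : a * q ≤ q * (a * q ^ n) := by
    have h1 : q * q ^ n ≤ q := by nlinarith
    have h2 := mul_le_mul_of_nonpos_left h1 ha.le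
    nlinarith
  have hc2lt : q * q ^ n < 1 := by nlinarith
  have hc2nn : (0:ℝ) ≤ q * q ^ n := by positivity
  -- denominator arguments
  have hd1 : a * q ^ n * y ≤ |a * y| := by
    calc a * q ^ n * y ≤ |a * q ^ n * y| := le_abs_self _
    _ = |a * y| * q ^ n := by rw [show a * q ^ n * y = a * y * q ^ n by ring,
        abs_mul, abs_of_pos hqn0]
    _ ≤ |a * y| * 1 := mul_le_mul_of_nonneg_left hqn1 (abs_nonneg _)
    _ = |a * y| := mul_one _
  have hd2 : a * q ^ n * t ≤ |a * t| := by
    calc a * q ^ n * t ≤ |a * q ^ n * t| := le_abs_self _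
    _ = |a * t| * q ^ n := by rw [show a * q ^ n * t = a * t * q ^ n by ring,
        abs_mul, abs_of_pos hqn0]
    _ ≤ |a * t| * 1 := mul_le_mul_of_nonneg_left hqn1 (abs_nonneg _)
    _ = |a * t| := mul_one _
  have hN1pos : 0 < qpochInf (q * (a * q ^ n)) q := qpoch_pos hq0 hq1 hc1lt
  have hN2pos : 0 < qpochInf (q * (a * q ^ n) / a) q := by
    rw [e2]; exact qpoch_pos hq0 hq1 hc2lt
  have hD1pos : 0 < qpochInf (a * q ^ n * y) q :=
    qpoch_pos hq0 hq1 (lt_of_le_of_lt hd1 hay)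
  have hD2pos : 0 < qpochInf (a * q ^ n * t) q :=
    qpoch_pos hq0 hq1 (lt_of_le_of_lt hd2 hat)
  have hYpos : 0 < qpochInf |a * y| q := qpoch_pos hq0 hq1 hay
  have hTpos : 0 < qpochInf |a * t| q := qpoch_pos hq0 hq1 hat
  have hN1le : qpochInf (q * (a * q ^ n)) q ≤ qpochInf (a * q) q :=
    qpoch_le hq0 hq1 hc1ge hc1lt
  have hN2le : qpochInf (q * (a * q ^ n) / a) q ≤ 1 := by
    rw [e2]
    have := qpoch_le hq0 hq1 hc2nn hc2lt
    rwa [qpoch_zero_s9] at this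
  have hD1ge : qpochInf |a * y| q ≤ qpochInf (a * q ^ n * y) q :=
    qpoch_le hq0 hq1 hd1 hay
  have hD2ge : qpochInf |a * t| q ≤ qpochInf (a * q ^ n * t) q :=
    qpoch_le hq0 hq1 hd2 hat
  have hAQpos : 0 < qpochInf (a * q) q :=
    qpoch_pos hq0 hq1 (by have := mul_neg_of_neg_of_pos ha hq0; linarith)
  constructor
  · rw [ascG]; positivity
  · rw [ascG]
    apply div_le_div₀ hAQpos.le
    · calc qpochInf (q * (a * q ^ n)) q * qpochInf (q * (a * q ^ n) / a) q
          ≤ qpochInf (a * q) q * 1 :=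
            mul_le_mul hN1le hN2le hN2pos.le hAQpos.le
      _ = qpochInf (a * q) q := mul_one _
    · positivity
    · exact mul_le_mul hD1ge hD2ge hTpos.le hD1pos.le

include hq0 hq1 in
lemma summable_geom_bound {f : ℕ → ℝ} {C : ℝ} (h : ∀ n, |f n| ≤ C * q ^ n) :
    Summable f := by
  apply Summable.of_abs
  apply Summable.of_nonneg_of_le (fun n => abs_nonneg _) h
  exact (summable_geometric_of_lt_one hq0.le hq1).mul_left C

end main3

section main4
variable {q a : ℝ} (hq0 : 0 < q) (hq1 : q < 1) (ha : a < 0)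

include hq0 hq1 ha in
lemma summable_G1 {y t : ℝ} (hy : |y| < 1) (hay : |a * y| < 1) (ht : |t| < 1)
    (hat : |a * t| < 1) :
    Summable (fun n => q ^ n * ascG q a y t (q ^ n)) := by
  apply summable_geom_bound hq0 hq1
    (C := qpochInf (q / a) q / (qpochInf |y| q * qpochInf |t| q))
  intro n
  obtain ⟨h1, h2⟩ := ascG_q_bounds hq0 hq1 ha hy ht (t := t) (y := y) n
  rw [abs_of_pos (by positivity : (0:ℝ) < q ^ n * ascG q a y t (q ^ n)), mul_comm]
  exact mul_le_mul_of_nonneg_right h2 (pow_pos hq0 n).le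

include hq0 hq1 ha in
lemma summable_G2 {y t : ℝ} (hy : |y| < 1) (hay : |a * y| < 1) (ht : |t| < 1)
    (hat : |a * t| < 1) :
    Summable (fun n => q ^ n * ascG q a y t (a * q ^ n)) := by
  apply summable_geom_bound hq0 hq1
    (C := qpochInf (a * q) q / (qpochInf |a * y| q * qpochInf |a * t| q))
  intro n
  obtain ⟨h1, h2⟩ := ascG_a_bounds hq0 hq1 ha hay hat (t := t) (y := y) n
  rw [abs_of_pos (by positivity : (0:ℝ) < q ^ n * ascG q a y t (a * q ^ n)), mul_comm]
  exact mul_le_mul_of_nonneg_right h2 (pow_pos hq0 n).le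

include hq0 hq1 ha in
lemma summable_H1 {y t : ℝ} (hy : |y| < 1) (hay : |a * y| < 1) (ht : |t| < 1)
    (hat : |a * t| < 1) :
    Summable (fun n => q ^ n * q ^ n * ascG q a y t (q ^ n)) := by
  apply summable_geom_bound hq0 hq1
    (C := qpochInf (q / a) q / (qpochInf |y| q * qpochInf |t| q))
  intro n
  obtain ⟨h1, h2⟩ := ascG_q_bounds hq0 hq1 ha hy ht (t := t) (y := y) n
  rw [abs_of_pos (by positivity : (0:ℝ) < q ^ n * q ^ n * ascG q a y t (q ^ n))]
  have hqn1 : q ^ n ≤ 1 := pow_le_one₀ hq0.le hq1.le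
  have hqn0 : (0:ℝ) < q ^ n := pow_pos hq0 n
  calc q ^ n * q ^ n * ascG q a y t (q ^ n)
      ≤ 1 * q ^ n * ascG q a y t (q ^ n) := by nlinarith [mul_pos hqn0 h1]
    _ = ascG q a y t (q ^ n) * q ^ n := by ring
    _ ≤ qpochInf (q / a) q / (qpochInf |y| q * qpochInf |t| q) * q ^ n :=
        mul_le_mul_of_nonneg_right h2 hqn0.le

include hq0 hq1 ha in
lemma summable_H2 {y t : ℝ} (hy : |y| < 1) (hay : |a * y| < 1) (ht : |t| < 1)
    (hat : |a * t| < 1) :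
    Summable (fun n => q ^ n * (a * q ^ n) * ascG q a y t (a * q ^ n)) := by
  apply summable_geom_bound hq0 hq1
    (C := (-a) * (qpochInf (a * q) q / (qpochInf |a * y| q * qpochInf |a * t| q)))
  intro n
  obtain ⟨h1, h2⟩ := ascG_a_bounds hq0 hq1 ha hay hat (t := t) (y := y) n
  have hqn0 : (0:ℝ) < q ^ n := pow_pos hq0 n
  have hqn1 : q ^ n ≤ 1 := pow_le_one₀ hq0.le hq1.le
  have hneg : q ^ n * (a * q ^ n) * ascG q a y t (a * q ^ n) < 0 := by
    apply mul_neg_of_neg_of_pos _ h1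
    exact mul_neg_of_pos_of_neg hqn0 (mul_neg_of_neg_of_pos ha hqn0)
  rw [abs_of_neg hneg]
  have key : q ^ n * (-a * q ^ n) * ascG q a y t (a * q ^ n)
      ≤ q ^ n * (-a) * (qpochInf (a * q) q / (qpochInf |a * y| q * qpochInf |a * t| q)) := by
    have hstep : -a * q ^ n ≤ -a := by nlinarith
    have c1 : q ^ n * (-a * q ^ n) * ascG q a y t (a * q ^ n)
        ≤ q ^ n * (-a) * ascG q a y t (a * q ^ n) := by nlinarith
    have c2 : q ^ n * (-a) * ascG q a y t (a * q ^ n)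
        ≤ q ^ n * (-a) * (qpochInf (a * q) q / (qpochInf |a * y| q * qpochInf |a * t| q)) := by
      apply mul_le_mul_of_nonneg_left h2
      nlinarith
    linarith
  nlinarith [key]

include hq0 hq1 ha in
lemma ascS_pos {y t : ℝ} (hy : |y| < 1) (hay : |a * y| < 1) (ht : |t| < 1)
    (hat : |a * t| < 1) (n : ℕ) : 0 < ascS q a y t n := by
  obtain ⟨h1, _⟩ := ascG_q_bounds hq0 hq1 ha hy ht (t := t) (y := y) n
  obtain ⟨h2, _⟩ := ascG_a_bounds hq0 hq1 ha hay hat (t := t) (y := y) n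
  have : 0 < -a * ascG q a y t (a * q ^ n) := mul_pos (by linarith) h2
  rw [ascS]
  have := pow_pos hq0 n
  nlinarith

include hq0 hq1 ha in
lemma summable_ascS {y t : ℝ} (hy : |y| < 1) (hay : |a * y| < 1) (ht : |t| < 1)
    (hat : |a * t| < 1) : Summable (ascS q a y t) := by
  have h1 := summable_G1 hq0 hq1 ha hy hay ht hat
  have h2 := (summable_G2 hq0 hq1 ha hy hay ht hat).mul_left a
  exact (h1.sub h2).congr (fun n => by rw [ascS]; ring)

include hq0 hq1 ha in
lemma ascF_eq_sub {y t : ℝ} (hy : |y| < 1) (hay : |a * y| < 1) (ht : |t| < 1)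
    (hat : |a * t| < 1) :
    ascF q a y t = (∑' n, q ^ n * ascG q a y t (q ^ n))
      - a * ∑' n, q ^ n * ascG q a y t (a * q ^ n) := by
  have h1 := summable_G1 hq0 hq1 ha hy hay ht hat
  have h2 := summable_G2 hq0 hq1 ha hy hay ht hat
  rw [ascF, ← tsum_mul_left, ← Summable.tsum_sub h1 (h2.mul_left a)]
  exact tsum_congr (fun n => by rw [ascS]; ring)

end main4

section main5
variable {q a : ℝ} (hq0 : 0 < q) (hq1 : q < 1) (ha : a < 0)

include hq0 hq1 in
lemma tendsto_qpoch_arg {c : ℝ} (hc : c < 1) {e : ℕ → ℝ} (he : ∀ n, e n = c * q ^ n) :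
    Tendsto (fun n => qpochInf (e n) q) atTop (𝓝 1) :=
  (qpoch_tendsto_one hq0 hq1 hc).congr (fun n => by rw [← he n])

include hq0 hq1 in
lemma tendsto_qpoch_pow : Tendsto (fun n : ℕ => qpochInf (q ^ n) q) atTop (𝓝 1) := by
  have h := tendsto_qpoch_arg hq0 hq1 hq1 (e := fun n => q ^ (n + 1))
    (fun n => by simp [pow_succ'])
  exact (tendsto_add_atTop_iff_nat 1).mp h

include hq0 hq1 in
lemma abs_lattice_q {y : ℝ} (hy : |y| < 1) (n : ℕ) : |q ^ n * y| < 1 := by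
  rw [abs_mul, abs_pow, abs_of_pos hq0]
  have h1 : q ^ n ≤ 1 := pow_le_one₀ hq0.le hq1.le
  have h2 : (0:ℝ) < q ^ n := pow_pos hq0 n
  nlinarith [abs_nonneg y]

include hq0 hq1 in
lemma abs_lattice_a {y : ℝ} (hay : |a * y| < 1) (n : ℕ) : |a * q ^ n * y| < 1 := by
  rw [show a * q ^ n * y = a * y * q ^ n by ring, abs_mul, abs_pow, abs_of_pos hq0]
  have h1 : q ^ n ≤ 1 := pow_le_one₀ hq0.le hq1.le
  have h2 : (0:ℝ) < q ^ n := pow_pos hq0 n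
  nlinarith [abs_nonneg (a * y)]

include hq0 hq1 ha in
lemma tendsto_psi_q {y t : ℝ} (hy : |y| < 1) (ht : |t| < 1) :
    Tendsto (fun n => ascPsi q a y t (q ^ n)) atTop (𝓝 1) := by
  have h1 := tendsto_qpoch_pow hq0 hq1
  have h2 := tendsto_qpoch_arg hq0 hq1 (c := a⁻¹)
    (by have := inv_neg''.mpr ha; linarith) (e := fun n => q ^ n / a) (fun n => by ring)
  have h3 := tendsto_qpoch_arg hq0 hq1 (c := y) ((abs_lt.1 hy).2)
    (e := fun n => q ^ n * y) (fun n => by ring)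
  have h4 := tendsto_qpoch_arg hq0 hq1 (c := t) ((abs_lt.1 ht).2)
    (e := fun n => q ^ n * t) (fun n => by ring)
  have := (h1.mul h2).div (h3.mul h4) (by norm_num)
  simp only [ascPsi]
  rw [show (1:ℝ) * 1 / (1 * 1) = 1 by norm_num] at this
  exact this

include hq0 hq1 ha in
lemma tendsto_psi_a {y t : ℝ} (hay : |a * y| < 1) (hat : |a * t| < 1) :
    Tendsto (fun n => ascPsi q a y t (a * q ^ n)) atTop (𝓝 1) := by
  have ha0 : a ≠ 0 := ha.ne
  have h1 := tendsto_qpoch_arg hq0 hq1 (c := a) (by linarith)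
    (e := fun n => a * q ^ n) (fun n => rfl)
  have h2 := (tendsto_qpoch_pow hq0 hq1).congr
    (fun n => by rw [show (q:ℝ) ^ n = a * q ^ n / a by field_simp])
  have h3 := tendsto_qpoch_arg hq0 hq1 (c := a * y) ((abs_lt.1 hay).2)
    (e := fun n => a * q ^ n * y) (fun n => by ring)
  have h4 := tendsto_qpoch_arg hq0 hq1 (c := a * t) ((abs_lt.1 hat).2)
    (e := fun n => a * q ^ n * t) (fun n => by ring)
  have := (h1.mul h2).div (h3.mul h4) (by norm_num)
  simp only [ascPsi]
  rw [show (1:ℝ) * 1 / (1 * 1) = 1 by norm_num] at this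
  exact this

include hq0 hq1 ha in
lemma funcEq {y t : ℝ} (hy : |y| < 1) (hay : |a * y| < 1) (ht : |t| < 1)
    (hat : |a * t| < 1) :
    (1 - a * y * t) * ascF q a y (q * t) = (1 - t) * (1 - a * t) * ascF q a y t := by
  have ha0 : a ≠ 0 := ha.ne
  have sG1 := summable_G1 hq0 hq1 ha hy hay ht hat
  have sG2 := summable_G2 hq0 hq1 ha hy hay ht hat
  have sH1 := summable_H1 hq0 hq1 ha hy hay ht hat
  have sH2 := summable_H2 hq0 hq1 ha hy hay ht hat
  set α : ℝ := y + t - 1 - a⁻¹ with hαdef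
  set β : ℝ := a⁻¹ - y * t with hβdef
  -- the telescoping identity on the q-lattice
  have keyU : ∀ n : ℕ, α * (q ^ n * ascG q a y t (q ^ n))
      + β * (q ^ n * q ^ n * ascG q a y t (q ^ n))
      = ascPsi q a y t (q ^ n) - ascPsi q a y t (q ^ (n + 1)) := by
    intro n
    have hL3 := pointL3 hq0 hq1 ha (y := y) (t := t) (x := q ^ n)
      (abs_lattice_q hq0 hq1 hy n) (abs_lattice_q hq0 hq1 ht n)
      (pow_le_one₀ hq0.le hq1.le)
      (by have : q ^ n / a < 0 := div_neg_of_pos_of_neg (pow_pos hq0 n) ha; linarith)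
    rw [pow_succ', hL3]
    ring
  have keyV : ∀ n : ℕ, a * α * (q ^ n * ascG q a y t (a * q ^ n))
      + a * β * (q ^ n * (a * q ^ n) * ascG q a y t (a * q ^ n))
      = ascPsi q a y t (a * q ^ n) - ascPsi q a y t (a * q ^ (n + 1)) := by
    intro n
    have hL3 := pointL3 hq0 hq1 ha (y := y) (t := t) (x := a * q ^ n)
      (abs_lattice_a hq0 hq1 hay n) (abs_lattice_a hq0 hq1 hat n)
      (by nlinarith [pow_pos hq0 n])
      (by rw [show a * q ^ n / a = q ^ n by field_simp]
          exact pow_le_one₀ hq0.le hq1.le)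
    rw [show a * q ^ (n+1) = q * (a * q ^ n) by ring, hL3]
    ring
  have hu0 : ascPsi q a y t (q ^ 0) = 0 := by
    rw [pow_zero, ascPsi, qpoch_one hq0 hq1, zero_mul, zero_div]
  have hv0 : ascPsi q a y t (a * q ^ 0) = 0 := by
    rw [pow_zero, mul_one, ascPsi, div_self ha0, qpoch_one hq0 hq1, mul_zero, zero_div]
  have sumU : ∑' n : ℕ, (α * (q ^ n * ascG q a y t (q ^ n))
      + β * (q ^ n * q ^ n * ascG q a y t (q ^ n))) = -1 := by
    have h := tsum_of_telescope ((sG1.mul_left α).add (sH1.mul_left β)) keyU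
      (tendsto_psi_q hq0 hq1 ha hy ht)
    rw [h]
    show ascPsi q a y t (q ^ 0) - 1 = -1
    rw [hu0]; ring
  have sumV : ∑' n : ℕ, (a * α * (q ^ n * ascG q a y t (a * q ^ n))
      + a * β * (q ^ n * (a * q ^ n) * ascG q a y t (a * q ^ n))) = -1 := by
    have h := tsum_of_telescope ((sG2.mul_left (a * α)).add (sH2.mul_left (a * β))) keyV
      (tendsto_psi_a hq0 hq1 ha hay hat)
    rw [h]
    show ascPsi q a y t (a * q ^ 0) - 1 = -1
    rw [hv0]; ring
  -- expand the two telescoped sums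
  have e1 : ∑' n : ℕ, (α * (q ^ n * ascG q a y t (q ^ n))
      + β * (q ^ n * q ^ n * ascG q a y t (q ^ n)))
      = α * (∑' n : ℕ, q ^ n * ascG q a y t (q ^ n))
        + β * (∑' n : ℕ, q ^ n * q ^ n * ascG q a y t (q ^ n)) := by
    rw [Summable.tsum_add (sG1.mul_left α) (sH1.mul_left β), tsum_mul_left, tsum_mul_left]
  have e2 : ∑' n : ℕ, (a * α * (q ^ n * ascG q a y t (a * q ^ n))
      + a * β * (q ^ n * (a * q ^ n) * ascG q a y t (a * q ^ n)))
      = a * α * (∑' n : ℕ, q ^ n * ascG q a y t (a * q ^ n))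
        + a * β * (∑' n : ℕ, q ^ n * (a * q ^ n) * ascG q a y t (a * q ^ n)) := by
    rw [Summable.tsum_add (sG2.mul_left (a * α)) (sH2.mul_left (a * β)), tsum_mul_left, tsum_mul_left]
  have hcomb : α * (∑' n : ℕ, q ^ n * ascG q a y t (q ^ n))
        + β * (∑' n : ℕ, q ^ n * q ^ n * ascG q a y t (q ^ n))
      - (a * α * (∑' n : ℕ, q ^ n * ascG q a y t (a * q ^ n))
        + a * β * (∑' n : ℕ, q ^ n * (a * q ^ n) * ascG q a y t (a * q ^ n))) = 0 := by
    rw [← e1, ← e2, sumU, sumV]; ring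
  -- expansion of F(y, qt)
  have hsplit : ∀ n : ℕ, ascS q a y (q * t) n
      = (q ^ n * ascG q a y t (q ^ n) - a * (q ^ n * ascG q a y t (a * q ^ n)))
        - t * (q ^ n * q ^ n * ascG q a y t (q ^ n)
          - a * (q ^ n * (a * q ^ n) * ascG q a y t (a * q ^ n))) := by
    intro n
    have p1 := pointQT hq0 hq1 (y := y) (t := t) (a := a) (x := q ^ n)
      (abs_lattice_q hq0 hq1 hy n) (abs_lattice_q hq0 hq1 ht n)
    have p2 := pointQT hq0 hq1 (y := y) (t := t) (a := a) (x := a * q ^ n)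
      (abs_lattice_a hq0 hq1 hay n) (abs_lattice_a hq0 hq1 hat n)
    rw [ascS, p1, p2]
    ring
  have hFq : ascF q a y (q * t)
      = ((∑' n : ℕ, q ^ n * ascG q a y t (q ^ n))
          - a * (∑' n : ℕ, q ^ n * ascG q a y t (a * q ^ n)))
        - t * ((∑' n : ℕ, q ^ n * q ^ n * ascG q a y t (q ^ n))
          - a * (∑' n : ℕ, q ^ n * (a * q ^ n) * ascG q a y t (a * q ^ n))) := by
    have hA : ascF q a y (q * t) = ∑' n : ℕ,
        ((q ^ n * ascG q a y t (q ^ n) - a * (q ^ n * ascG q a y t (a * q ^ n)))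
          - t * (q ^ n * q ^ n * ascG q a y t (q ^ n)
            - a * (q ^ n * (a * q ^ n) * ascG q a y t (a * q ^ n)))) := by
      rw [ascF]; exact tsum_congr hsplit
    have hB : ∑' n : ℕ,
        ((q ^ n * ascG q a y t (q ^ n) - a * (q ^ n * ascG q a y t (a * q ^ n)))
          - t * (q ^ n * q ^ n * ascG q a y t (q ^ n)
            - a * (q ^ n * (a * q ^ n) * ascG q a y t (a * q ^ n))))
        = (∑' n : ℕ, (q ^ n * ascG q a y t (q ^ n)
            - a * (q ^ n * ascG q a y t (a * q ^ n))))
          - ∑' n : ℕ, t * (q ^ n * q ^ n * ascG q a y t (q ^ n)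
            - a * (q ^ n * (a * q ^ n) * ascG q a y t (a * q ^ n))) :=
      Summable.tsum_sub (sG1.sub (sG2.mul_left a)) ((sH1.sub (sH2.mul_left a)).mul_left t)
    have hC : ∑' n : ℕ, (q ^ n * ascG q a y t (q ^ n)
          - a * (q ^ n * ascG q a y t (a * q ^ n)))
        = (∑' n : ℕ, q ^ n * ascG q a y t (q ^ n))
          - ∑' n : ℕ, a * (q ^ n * ascG q a y t (a * q ^ n)) :=
      Summable.tsum_sub sG1 (sG2.mul_left a)
    have hD : ∑' n : ℕ, (q ^ n * q ^ n * ascG q a y t (q ^ n)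
          - a * (q ^ n * (a * q ^ n) * ascG q a y t (a * q ^ n)))
        = (∑' n : ℕ, q ^ n * q ^ n * ascG q a y t (q ^ n))
          - ∑' n : ℕ, a * (q ^ n * (a * q ^ n) * ascG q a y t (a * q ^ n)) :=
      Summable.tsum_sub sH1 (sH2.mul_left a)
    have hE1 : ∑' n : ℕ, a * (q ^ n * ascG q a y t (a * q ^ n))
        = a * ∑' n : ℕ, q ^ n * ascG q a y t (a * q ^ n) := tsum_mul_left
    have hE2 : ∑' n : ℕ, a * (q ^ n * (a * q ^ n) * ascG q a y t (a * q ^ n))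
        = a * ∑' n : ℕ, q ^ n * (a * q ^ n) * ascG q a y t (a * q ^ n) := tsum_mul_left
    have hE3 : ∑' n : ℕ, t * (q ^ n * q ^ n * ascG q a y t (q ^ n)
          - a * (q ^ n * (a * q ^ n) * ascG q a y t (a * q ^ n)))
        = t * ∑' n : ℕ, (q ^ n * q ^ n * ascG q a y t (q ^ n)
          - a * (q ^ n * (a * q ^ n) * ascG q a y t (a * q ^ n))) := tsum_mul_left
    rw [hA, hB, hC, hE1, hE3, hD, hE2]
  have hF : ascF q a y t = (∑' n : ℕ, q ^ n * ascG q a y t (q ^ n))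
      - a * (∑' n : ℕ, q ^ n * ascG q a y t (a * q ^ n)) :=
    ascF_eq_sub hq0 hq1 ha hy hay ht hat
  -- clear the inverses in α, β
  have hαa : a * α = a * y + a * t - a - 1 := by
    rw [hαdef]; field_simp
  have hβa : a * β = 1 - a * (y * t) := by
    rw [hβdef]; field_simp
  have hcomb2 : (a * y + a * t - a - 1) * ((∑' n : ℕ, q ^ n * ascG q a y t (q ^ n))
        - a * (∑' n : ℕ, q ^ n * ascG q a y t (a * q ^ n)))
      + (1 - a * (y * t)) * ((∑' n : ℕ, q ^ n * q ^ n * ascG q a y t (q ^ n))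
        - a * (∑' n : ℕ, q ^ n * (a * q ^ n) * ascG q a y t (a * q ^ n))) = 0 := by
    linear_combination a * hcomb
      - ((∑' n : ℕ, q ^ n * ascG q a y t (q ^ n))
        - a * (∑' n : ℕ, q ^ n * ascG q a y t (a * q ^ n))) * hαa
      - ((∑' n : ℕ, q ^ n * q ^ n * ascG q a y t (q ^ n))
        - a * (∑' n : ℕ, q ^ n * (a * q ^ n) * ascG q a y t (a * q ^ n))) * hβa
  rw [hFq, hF]
  linear_combination (-t) * hcomb2
end main5

section main6
variable {q a : ℝ} (hq0 : 0 < q) (hq1 : q < 1) (ha : a < 0)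

lemma ascF_symm (y t : ℝ) : ascF q a y t = ascF q a t y := by
  rw [ascF, ascF]
  exact tsum_congr fun n => by simp only [ascS, ascG]; ring

include hq0 hq1 ha in
lemma ascS_bound_unif {y s r ra : ℝ} (hy : |y| < 1) (hay : |a * y| < 1)
    (hsr : |s| ≤ r) (hsra : |a * s| ≤ ra) (hr : r < 1) (hra : ra < 1) (n : ℕ) :
    |ascS q a y s n| ≤ (qpochInf (q / a) q / (qpochInf |y| q * qpochInf r q)
      + (-a) * (qpochInf (a * q) q / (qpochInf |a * y| q * qpochInf ra q))) * q ^ n := by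
  have hs : |s| < 1 := hsr.trans_lt hr
  have has : |a * s| < 1 := hsra.trans_lt hra
  obtain ⟨g1p, g1b⟩ := ascG_q_bounds hq0 hq1 ha hy hs n
  obtain ⟨g2p, g2b⟩ := ascG_a_bounds hq0 hq1 ha hay has n
  have hrpos : 0 < qpochInf r q := qpoch_pos hq0 hq1 hr
  have hrapos : 0 < qpochInf ra q := qpoch_pos hq0 hq1 hra
  have hspos : 0 < qpochInf |s| q := qpoch_pos hq0 hq1 hs
  have haspos : 0 < qpochInf |a * s| q := qpoch_pos hq0 hq1 has
  have hypos : 0 < qpochInf |y| q := qpoch_pos hq0 hq1 hy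
  have haypos : 0 < qpochInf |a * y| q := qpoch_pos hq0 hq1 hay
  have hqa : 0 < qpochInf (q / a) q :=
    qpoch_pos hq0 hq1 (by have : q / a < 0 := div_neg_of_pos_of_neg hq0 ha; linarith)
  have haq : 0 < qpochInf (a * q) q :=
    qpoch_pos hq0 hq1 (by have := mul_neg_of_neg_of_pos ha hq0; linarith)
  have m1 : qpochInf r q ≤ qpochInf |s| q := qpoch_le hq0 hq1 hsr hr
  have m2 : qpochInf ra q ≤ qpochInf |a * s| q := qpoch_le hq0 hq1 hsra hra
  have g1b' : ascG q a y s (q ^ n) ≤ qpochInf (q / a) q / (qpochInf |y| q * qpochInf r q) := by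
    refine g1b.trans ?_
    apply div_le_div_of_nonneg_left hqa.le (by positivity) ?_
    exact mul_le_mul_of_nonneg_left m1 hypos.le
  have g2b' : ascG q a y s (a * q ^ n)
      ≤ qpochInf (a * q) q / (qpochInf |a * y| q * qpochInf ra q) := by
    refine g2b.trans ?_
    apply div_le_div_of_nonneg_left haq.le (by positivity) ?_
    exact mul_le_mul_of_nonneg_left m2 haypos.le
  have hpos : 0 < ascS q a y s n := ascS_pos hq0 hq1 ha hy hay hs has n
  rw [abs_of_pos hpos, ascS]
  have hqn : (0:ℝ) < q ^ n := pow_pos hq0 n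
  have expand : (qpochInf (q / a) q / (qpochInf |y| q * qpochInf r q)
      + (-a) * (qpochInf (a * q) q / (qpochInf |a * y| q * qpochInf ra q))) * q ^ n
      = q ^ n * (qpochInf (q / a) q / (qpochInf |y| q * qpochInf r q))
        + q ^ n * ((-a) * (qpochInf (a * q) q / (qpochInf |a * y| q * qpochInf ra q))) := by
    ring
  rw [expand]
  have t1 : q ^ n * ascG q a y s (q ^ n)
      ≤ q ^ n * (qpochInf (q / a) q / (qpochInf |y| q * qpochInf r q)) :=
    mul_le_mul_of_nonneg_left g1b' hqn.le
  have t2 : q ^ n * (-a * ascG q a y s (a * q ^ n))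
      ≤ q ^ n * ((-a) * (qpochInf (a * q) q / (qpochInf |a * y| q * qpochInf ra q))) := by
    apply mul_le_mul_of_nonneg_left _ hqn.le
    exact mul_le_mul_of_nonneg_left g2b' (by linarith)
  nlinarith [t1, t2]

include hq0 hq1 ha in
lemma tendsto_ascF_param {y t : ℝ} (hy : |y| < 1) (hay : |a * y| < 1) (ht : |t| < 1)
    (hat : |a * t| < 1) :
    Tendsto (fun k : ℕ => ascF q a y (q ^ k * t)) atTop (𝓝 (ascF q a y 0)) := by
  have hC : Summable (fun n : ℕ => (qpochInf (q / a) q / (qpochInf |y| q * qpochInf |t| q)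
      + (-a) * (qpochInf (a * q) q / (qpochInf |a * y| q * qpochInf |a * t| q))) * q ^ n) :=
    (summable_geometric_of_lt_one hq0.le hq1).mul_left _
  have main := tendsto_tsum_of_dominated_convergence (𝓕 := atTop)
    (f := fun (k : ℕ) (n : ℕ) => ascS q a y (q ^ k * t) n)
    (g := ascS q a y 0)
    (bound := fun n : ℕ => (qpochInf (q / a) q / (qpochInf |y| q * qpochInf |t| q)
      + (-a) * (qpochInf (a * q) q / (qpochInf |a * y| q * qpochInf |a * t| q))) * q ^ n)
    hC ?_ ?_
  · exact main
  · -- pointwise convergence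
    intro n
    have hc1 : |q ^ n * t| < 1 := abs_lattice_q hq0 hq1 ht n
    have hc2 : |a * q ^ n * t| < 1 := abs_lattice_a hq0 hq1 hat n
    have T1 := tendsto_qpoch_arg hq0 hq1 (c := q ^ n * t) ((abs_lt.1 hc1).2)
      (e := fun k => q ^ n * (q ^ k * t)) (fun k => by ring)
    have T2 := tendsto_qpoch_arg hq0 hq1 (c := a * q ^ n * t) ((abs_lt.1 hc2).2)
      (e := fun k => a * q ^ n * (q ^ k * t)) (fun k => by ring)
    have hD1 : (0:ℝ) < qpochInf (q ^ n * y) q :=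
      qpoch_pos hq0 hq1 ((abs_lt.1 (abs_lattice_q hq0 hq1 hy n)).2)
    have hD2 : (0:ℝ) < qpochInf (a * q ^ n * y) q :=
      qpoch_pos hq0 hq1 ((abs_lt.1 (abs_lattice_a hq0 hq1 hay n)).2)
    have Tfull : Tendsto (fun k : ℕ =>
        q ^ n * (qpochInf (q * q ^ n) q * qpochInf (q * q ^ n / a) q /
            (qpochInf (q ^ n * y) q * qpochInf (q ^ n * (q ^ k * t)) q)
          - a * (qpochInf (q * (a * q ^ n)) q * qpochInf (q * (a * q ^ n) / a) q /
            (qpochInf (a * q ^ n * y) q * qpochInf (a * q ^ n * (q ^ k * t)) q))))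
        atTop (𝓝 (q ^ n * (qpochInf (q * q ^ n) q * qpochInf (q * q ^ n / a) q /
            (qpochInf (q ^ n * y) q * 1)
          - a * (qpochInf (q * (a * q ^ n)) q * qpochInf (q * (a * q ^ n) / a) q /
            (qpochInf (a * q ^ n * y) q * 1))))) := by
      apply Tendsto.const_mul
      apply Tendsto.sub
      · exact tendsto_const_nhds.div (tendsto_const_nhds.mul T1) (by simp [hD1.ne'])
      · exact (tendsto_const_nhds.div (tendsto_const_nhds.mul T2) (by simp [hD2.ne'])).const_mul a
    have hval : ascS q a y 0 n
        = q ^ n * (qpochInf (q * q ^ n) q * qpochInf (q * q ^ n / a) q /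
            (qpochInf (q ^ n * y) q * 1)
          - a * (qpochInf (q * (a * q ^ n)) q * qpochInf (q * (a * q ^ n) / a) q /
            (qpochInf (a * q ^ n * y) q * 1))) := by
      rw [ascS, ascG, ascG, mul_zero, mul_zero, qpoch_zero_s9]
    rw [hval]
    apply Tfull.congr
    intro k
    simp only [ascS, ascG]
  · -- uniform bound
    filter_upwards with k
    intro n
    rw [Real.norm_eq_abs]
    apply ascS_bound_unif hq0 hq1 ha hy hay (s := q ^ k * t) ?_ ?_ ht hat n
    · rw [abs_mul, abs_pow, abs_of_pos hq0]
      have h1 : q ^ k ≤ 1 := pow_le_one₀ hq0.le hq1.le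
      nlinarith [abs_nonneg t, pow_pos hq0 k]
    · rw [show a * (q ^ k * t) = a * t * q ^ k by ring, abs_mul, abs_pow, abs_of_pos hq0]
      have h1 : q ^ k ≤ 1 := pow_le_one₀ hq0.le hq1.le
      nlinarith [abs_nonneg (a * t), pow_pos hq0 k]

include hq0 hq1 ha in
lemma iterEq {y t : ℝ} (hy : |y| < 1) (hay : |a * y| < 1) (ht : |t| < 1)
    (hat : |a * t| < 1) :
    ascF q a y t * (qpochInf t q * qpochInf (a * t) q)
      = qpochInf (a * y * t) q * ascF q a y 0 := by
  have hayt : |a * y * t| < 1 := by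
    rw [abs_mul]
    nlinarith [abs_nonneg (a * y), abs_nonneg t]
  have ht1 : t < 1 := (abs_lt.1 ht).2
  have hat1 : a * t < 1 := (abs_lt.1 hat).2
  have hayt1 : a * y * t < 1 := (abs_lt.1 hayt).2
  have claim : ∀ k : ℕ,
      (∏ i ∈ Finset.range k, (1 - t * q ^ i)) * (∏ i ∈ Finset.range k, (1 - a * t * q ^ i))
        * ascF q a y t
      = (∏ i ∈ Finset.range k, (1 - a * y * t * q ^ i)) * ascF q a y (q ^ k * t) := by
    intro k
    induction k with
    | zero => simp
    | succ k ih =>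
      have habs1 : |q ^ k * t| < 1 := abs_lattice_q hq0 hq1 ht k
      have habs2 : |a * (q ^ k * t)| < 1 := by
        rw [show a * (q ^ k * t) = a * q ^ k * t by ring]
        exact abs_lattice_a hq0 hq1 hat k
      have fe := funcEq hq0 hq1 ha (t := q ^ k * t) hy hay habs1 habs2
      rw [show q * (q ^ k * t) = q ^ (k + 1) * t by ring] at fe
      rw [Finset.prod_range_succ, Finset.prod_range_succ, Finset.prod_range_succ]
      linear_combination ((1 - t * q ^ k) * (1 - a * t * q ^ k)) * ih
        - (∏ i ∈ Finset.range k, (1 - a * y * t * q ^ i)) * fe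
  have l1 : Tendsto (fun k : ℕ =>
      (∏ i ∈ Finset.range k, (1 - t * q ^ i)) * (∏ i ∈ Finset.range k, (1 - a * t * q ^ i))
        * ascF q a y t) atTop
      (𝓝 (qpochInf t q * qpochInf (a * t) q * ascF q a y t)) :=
    (((qpoch_hasProd hq0 hq1 ht1).tendsto_prod_nat).mul
      ((qpoch_hasProd hq0 hq1 hat1).tendsto_prod_nat)).mul_const _
  have l2 : Tendsto (fun k : ℕ =>
      (∏ i ∈ Finset.range k, (1 - a * y * t * q ^ i)) * ascF q a y (q ^ k * t)) atTop
      (𝓝 (qpochInf (a * y * t) q * ascF q a y 0)) :=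
    ((qpoch_hasProd hq0 hq1 hayt1).tendsto_prod_nat).mul
      (tendsto_ascF_param hq0 hq1 ha hy hay ht hat)
  have := tendsto_nhds_unique (l1.congr (fun k => claim k)) l2
  rw [← this]; ring

end main6

section main7
variable {q a : ℝ} (hq0 : 0 < q) (hq1 : q < 1) (ha : a < 0)

include hq0 hq1 ha in
lemma base1 (hA : -1 ≤ a) : ascF q a q 0 = -a * qpochInf (1 / a) q := by
  have ha0 : a ≠ 0 := ha.ne
  have hainv : a⁻¹ < 0 := inv_neg''.mpr ha
  have key : ∀ n : ℕ, ascS q a q 0 n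
      = (-a * qpochInf (q ^ n / a) q + a * qpochInf (q ^ n) q)
        - (-a * qpochInf (q ^ (n + 1) / a) q + a * qpochInf (q ^ (n + 1)) q) := by
    intro n
    have hqn1 : q ^ n ≤ 1 := pow_le_one₀ hq0.le hq1.le
    have hqn0 : (0:ℝ) < q ^ n := pow_pos hq0 n
    have n1 : (0:ℝ) < qpochInf (q * q ^ n) q := qpoch_pos hq0 hq1 (by nlinarith)
    have n2 : (0:ℝ) < qpochInf (q * (a * q ^ n)) q := qpoch_pos hq0 hq1
      (by have := mul_neg_of_pos_of_neg hq0 (mul_neg_of_neg_of_pos ha hqn0); linarith)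
    have e1 : qpochInf (q ^ n / a) q = (1 - q ^ n / a) * qpochInf (q * q ^ n / a) q := by
      rw [qpoch_step hq0 hq1
        (by have : q ^ n / a < 0 := div_neg_of_pos_of_neg hqn0 ha; linarith),
        show q ^ n / a * q = q * q ^ n / a by ring]
    have e2 : qpochInf (q ^ (n + 1) / a) q = qpochInf (q * q ^ n / a) q := by
      rw [show q ^ (n + 1) / a = q * q ^ n / a by ring]
    have e3 : qpochInf (q ^ n) q = (1 - q ^ n) * qpochInf (q * q ^ n) q := by
      rw [qpoch_step hq0 hq1 hqn1, show q ^ n * q = q * q ^ n by ring]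
    have e4 : qpochInf (q ^ (n + 1)) q = qpochInf (q * q ^ n) q := by
      rw [pow_succ']
    rw [ascS, ascG, ascG, mul_zero, mul_zero, qpoch_zero_s9, mul_one, mul_one,
      show q ^ n * q = q * q ^ n by ring, show a * q ^ n * q = q * (a * q ^ n) by ring,
      show q * (a * q ^ n) / a = q * q ^ n by field_simp,
      e1, e2, e3, e4]
    generalize qpochInf (q * (a * q ^ n)) q = B at n2 ⊢
    generalize qpochInf (q * q ^ n) q = A at n1 ⊢
    field_simp
    ring
  have hsum : Summable (ascS q a q 0) := by
    apply summable_ascS hq0 hq1 ha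
    · rwa [abs_of_pos hq0]
    · rw [abs_mul, abs_of_pos hq0, abs_of_neg ha]; nlinarith
    · simp
    · simp
  have TW : Tendsto (fun n : ℕ => -a * qpochInf (q ^ n / a) q + a * qpochInf (q ^ n) q)
      atTop (𝓝 (-a * 1 + a * 1)) :=
    ((tendsto_qpoch_arg hq0 hq1 (by linarith : a⁻¹ < 1)
        (e := fun n => q ^ n / a) (fun n => by ring)).const_mul (-a)).add
      ((tendsto_qpoch_pow hq0 hq1).const_mul a)
  have := tsum_of_telescope hsum key TW
  rw [ascF, this]
  show -a * qpochInf (q ^ 0 / a) q + a * qpochInf (q ^ 0) q - (-a * 1 + a * 1)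
      = -a * qpochInf (1 / a) q
  rw [pow_zero, qpoch_one hq0 hq1]
  ring

include hq0 hq1 ha in
lemma base2 (hA : a ≤ -1) : ascF q a (q / a) 0 = qpochInf a q := by
  have ha0 : a ≠ 0 := ha.ne
  have key : ∀ n : ℕ, ascS q a (q / a) 0 n
      = (-qpochInf (q ^ n) q + qpochInf (a * q ^ n) q)
        - (-qpochInf (q ^ (n + 1)) q + qpochInf (a * q ^ (n + 1)) q) := by
    intro n
    have hqn1 : q ^ n ≤ 1 := pow_le_one₀ hq0.le hq1.le
    have hqn0 : (0:ℝ) < q ^ n := pow_pos hq0 n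
    have n1 : (0:ℝ) < qpochInf (q * q ^ n) q := qpoch_pos hq0 hq1 (by nlinarith)
    have n2 : (0:ℝ) < qpochInf (q * (a * q ^ n)) q := qpoch_pos hq0 hq1
      (by have := mul_neg_of_pos_of_neg hq0 (mul_neg_of_neg_of_pos ha hqn0); linarith)
    have e3 : qpochInf (q ^ n) q = (1 - q ^ n) * qpochInf (q * q ^ n) q := by
      rw [qpoch_step hq0 hq1 hqn1, show q ^ n * q = q * q ^ n by ring]
    have e4 : qpochInf (q ^ (n + 1)) q = qpochInf (q * q ^ n) q := by
      rw [pow_succ']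
    have e5 : qpochInf (a * q ^ n) q
        = (1 - a * q ^ n) * qpochInf (q * (a * q ^ n)) q := by
      rw [qpoch_step hq0 hq1
        (by have := mul_neg_of_neg_of_pos ha hqn0; linarith),
        show a * q ^ n * q = q * (a * q ^ n) by ring]
    have e6 : qpochInf (a * q ^ (n + 1)) q = qpochInf (q * (a * q ^ n)) q := by
      rw [show a * q ^ (n + 1) = q * (a * q ^ n) by ring]
    rw [ascS, ascG, ascG, mul_zero, mul_zero, qpoch_zero_s9, mul_one, mul_one,
      show q ^ n * (q / a) = q * q ^ n / a by ring,
      show a * q ^ n * (q / a) = q * q ^ n by field_simp,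
      show q * (a * q ^ n) / a = q * q ^ n by field_simp,
      e3, e4, e5, e6]
    have n3 : (0:ℝ) < qpochInf (q * q ^ n / a) q := qpoch_pos hq0 hq1
      (by have : q * q ^ n / a < 0 := div_neg_of_pos_of_neg (by positivity) ha; linarith)
    generalize qpochInf (q * (a * q ^ n)) q = B at n2 ⊢
    generalize qpochInf (q * q ^ n) q = A at n1 ⊢
    generalize qpochInf (q * q ^ n / a) q = C at n3 ⊢
    field_simp
    ring
  have hsum : Summable (ascS q a (q / a) 0) := by
    apply summable_ascS hq0 hq1 ha
    · rw [abs_div, abs_of_pos hq0, abs_of_neg ha, div_lt_one (by linarith)]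
      linarith
    · rw [show a * (q / a) = q by field_simp, abs_of_pos hq0]
      exact hq1
    · simp
    · simp
  have TW : Tendsto (fun n : ℕ => -qpochInf (q ^ n) q + qpochInf (a * q ^ n) q)
      atTop (𝓝 (-1 + 1)) := by
    have h1 := tendsto_qpoch_pow hq0 hq1
    have h2 := tendsto_qpoch_arg hq0 hq1 (by linarith : a < 1)
      (e := fun n => a * q ^ n) (fun n => rfl)
    exact (h1.neg).add h2
  have := tsum_of_telescope hsum key TW
  rw [ascF, this]
  show -qpochInf (q ^ 0) q + qpochInf (a * q ^ 0) q - (-1 + 1) = qpochInf a q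
  rw [pow_zero, qpoch_one hq0 hq1, mul_one]
  ring

end main7

section main8
variable {q a : ℝ} (hq0 : 0 < q) (hq1 : q < 1) (ha : a < 0)

include hq0 hq1 ha in
lemma baseF : ascF q a 0 0 = qpochInf q q * qpochInf a q * qpochInf (q / a) q := by
  have ha0 : a ≠ 0 := ha.ne
  rcases le_or_gt (-1) a with hA | hA
  · have hy' : |(0:ℝ)| < 1 := by norm_num
    have ht' : |q| < 1 := by rwa [abs_of_pos hq0]
    have hat' : |a * q| < 1 := by
      rw [abs_mul, abs_of_pos hq0, abs_of_neg ha]; nlinarith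
    have hay' : |a * 0| < 1 := by simp
    have it := iterEq hq0 hq1 ha (y := 0) (t := q) hy' hay' ht' hat'
    rw [show a * 0 * q = 0 by ring, qpoch_zero_s9, one_mul, ascF_symm,
      base1 hq0 hq1 ha hA] at it
    rw [← it]
    have s1 : qpochInf a q = (1 - a) * qpochInf (a * q) q :=
      qpoch_step hq0 hq1 (by linarith)
    have s2 : qpochInf (1 / a) q = (1 - 1 / a) * qpochInf (q / a) q := by
      rw [qpoch_step hq0 hq1
        (by have : 1 / a < 0 := div_neg_of_pos_of_neg one_pos ha; linarith),
        show 1 / a * q = q / a by ring]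
    rw [s1, s2]
    field_simp
    ring
  · have hy' : |(0:ℝ)| < 1 := by norm_num
    have ht' : |q / a| < 1 := by
      rw [abs_div, abs_of_pos hq0, abs_of_neg ha, div_lt_one (by linarith)]
      linarith
    have hat' : |a * (q / a)| < 1 := by
      rw [show a * (q / a) = q by field_simp, abs_of_pos hq0]; exact hq1
    have hay' : |a * 0| < 1 := by simp
    have it := iterEq hq0 hq1 ha (y := 0) (t := q / a) hy' hay' ht' hat'
    rw [show a * 0 * (q / a) = 0 by ring, qpoch_zero_s9, one_mul,
      show a * (q / a) = q by field_simp, ascF_symm,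
      base2 hq0 hq1 ha hA.le] at it
    rw [← it]
    ring

end main8

/-- Evaluation of the bilinear generating function of the Al-Salam–Carlitz
functional via the Jackson q-integral. -/
theorem al_salam_carlitz_bilinear (q a y t : ℝ)
    (hq0 : 0 < q) (hq1 : q < 1) (ha : a < 0)
    (hy : |y| < 1) (hay : |a * y| < 1) (ht : |t| < 1) (hat : |a * t| < 1) :
    Summable (fun n : ℕ =>
      |q ^ n *
        ((qpochInf (q * q ^ n) q * qpochInf (q * q ^ n / a) q /
            (qpochInf (q ^ n * y) q * qpochInf (q ^ n * t) q)) -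
          a * (qpochInf (q * (a * q ^ n)) q * qpochInf (q * (a * q ^ n) / a) q /
            (qpochInf ((a * q ^ n) * y) q * qpochInf ((a * q ^ n) * t) q)))|) ∧
    (qpochInf y q * qpochInf (a * y) q /
        (qpochInf q q * qpochInf a q * qpochInf (q / a) q)) *
      (∑' n : ℕ, q ^ n *
        ((qpochInf (q * q ^ n) q * qpochInf (q * q ^ n / a) q /
            (qpochInf (q ^ n * y) q * qpochInf (q ^ n * t) q)) -
          a * (qpochInf (q * (a * q ^ n)) q * qpochInf (q * (a * q ^ n) / a) q /
            (qpochInf ((a * q ^ n) * y) q * qpochInf ((a * q ^ n) * t) q)))) =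
    qpochInf (a * y * t) q / (qpochInf t q * qpochInf (a * t) q) := by
  have hsum : Summable (ascS q a y t) := summable_ascS hq0 hq1 ha hy hay ht hat
  constructor
  · exact hsum.abs
  · have hkey : (∑' n : ℕ, q ^ n *
        ((qpochInf (q * q ^ n) q * qpochInf (q * q ^ n / a) q /
            (qpochInf (q ^ n * y) q * qpochInf (q ^ n * t) q)) -
          a * (qpochInf (q * (a * q ^ n)) q * qpochInf (q * (a * q ^ n) / a) q /
            (qpochInf ((a * q ^ n) * y) q * qpochInf ((a * q ^ n) * t) q))))
        = ascF q a y t := by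
      rw [ascF]
      exact tsum_congr fun n => by simp only [ascS, ascG]
    rw [hkey]
    -- chain of evaluations
    have it1 := iterEq hq0 hq1 ha hy hay ht hat
    have hy0 : |(0:ℝ)| < 1 := by norm_num
    have hay0 : |a * 0| < 1 := by simp
    have it2 := iterEq hq0 hq1 ha (y := 0) (t := y) hy0 hay0 hy hay
    rw [show a * 0 * y = 0 by ring, qpoch_zero_s9, one_mul, ascF_symm] at it2
    -- it2 : ascF q a y 0 * (qpochInf y q * qpochInf (a*y) q) = ascF q a 0 0
    have hb := baseF hq0 hq1 ha
    -- nonvanishing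
    have pt : 0 < qpochInf t q := qpoch_pos hq0 hq1 (abs_lt.1 ht).2
    have pat : 0 < qpochInf (a * t) q := qpoch_pos hq0 hq1 (abs_lt.1 hat).2
    have py : 0 < qpochInf y q := qpoch_pos hq0 hq1 (abs_lt.1 hy).2
    have pay : 0 < qpochInf (a * y) q := qpoch_pos hq0 hq1 (abs_lt.1 hay).2
    have pq : 0 < qpochInf q q := qpoch_pos hq0 hq1 hq1
    have pa : 0 < qpochInf a q := qpoch_pos hq0 hq1 (by linarith)
    have pqa : 0 < qpochInf (q / a) q :=
      qpoch_pos hq0 hq1 (by have : q / a < 0 := div_neg_of_pos_of_neg hq0 ha; linarith)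
    rw [div_mul_eq_mul_div, div_eq_div_iff (by positivity) (by positivity)]
    -- goal : P y * P(ay) * ascF q a y t * (P t * P (at)) = P(ayt) * (P q * P a * P(q/a))
    calc qpochInf y q * qpochInf (a * y) q * ascF q a y t * (qpochInf t q * qpochInf (a * t) q)
        = qpochInf y q * qpochInf (a * y) q *
            (ascF q a y t * (qpochInf t q * qpochInf (a * t) q)) := by ring
      _ = qpochInf y q * qpochInf (a * y) q * (qpochInf (a * y * t) q * ascF q a y 0) := by
          rw [it1]
      _ = qpochInf (a * y * t) q * (ascF q a y 0 * (qpochInf y q * qpochInf (a * y) q)) := by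
          ring
      _ = qpochInf (a * y * t) q * ascF q a 0 0 := by rw [it2]
      _ = qpochInf (a * y * t) q * (qpochInf q q * qpochInf a q * qpochInf (q / a) q) := by
          rw [hb]
end

section
/- For all m, n ∈ ℕ and x ∈ ℝ, the Hermite polynomials satisfy the convolution identity H_{m+n}(x)/(m! n!) = Σ_{k=0}^{min(m,n)} ((-2)^k/k!) · (H_{m-k}(x)/(m-k)!) · (H_{n-k}(x)/(n-k)!). -/
/-- The physicists' Hermite polynomial `H_n(x)`. -/
noncomputable def hermiteH (n : ℕ) (x : ℝ) : ℝ :=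
  (n.factorial : ℝ) *
    ∑ k ∈ Finset.range (n / 2 + 1),
      (-1) ^ k * (2 * x) ^ (n - 2 * k) / (k.factorial * (n - 2 * k).factorial)

namespace HermAux

noncomputable def g (x : ℝ) (n k : ℕ) : ℝ :=
  if 2 * k ≤ n then
    (-1) ^ k * (2 * x) ^ (n - 2 * k) * (n.factorial : ℝ) /
      (k.factorial * (n - 2 * k).factorial)
  else 0

lemma hermiteH_eq_sum_g (x : ℝ) (n N : ℕ) (hN : n / 2 + 1 ≤ N) :
    hermiteH n x = ∑ k ∈ Finset.range N, g x n k := by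
  rw [hermiteH, Finset.mul_sum]
  rw [← Finset.sum_subset (Finset.range_subset_range.mpr hN)]
  · apply Finset.sum_congr rfl
    intro k hk
    have h2 : 2 * k ≤ n := by
      have := Finset.mem_range.mp hk; omega
    rw [g, if_pos h2]; ring
  · intro k _ hk
    have h2 : ¬ 2 * k ≤ n := by
      simp only [Finset.mem_range, not_lt] at hk; omega
    rw [g, if_neg h2]


lemma g_rec (x : ℝ) (n k : ℕ) :
    g x (n+2) k = 2*x * g x (n+1) k - 2*(n+1) * (if 1 ≤ k then g x n (k-1) else 0) := by
  have fne : ∀ m : ℕ, (m.factorial : ℝ) ≠ 0 := fun m =>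
    Nat.cast_ne_zero.mpr (Nat.factorial_ne_zero m)
  rcases k with _ | j
  · simp only [g]
    simp only [Nat.mul_zero, Nat.zero_le, if_pos, if_neg (by omega : ¬ (1:ℕ) ≤ 0)]
    simp only [Nat.sub_zero, pow_zero, one_mul, Nat.factorial_zero, Nat.cast_one]
    rw [Nat.factorial_succ (n+1)]
    push_cast
    field_simp
    ring
  · rcases lt_trichotomy (2*(j+1)) (n+2) with h | h | h
    · -- 2(j+1) ≤ n+1, so n = 2j+1+d
      obtain ⟨d, rfl⟩ : ∃ d, n = 2*j+1+d := ⟨n - (2*j+1), by omega⟩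
      have h1 : 2*(j+1) ≤ 2*j+1+d+2 := by omega
      have h2 : 2*(j+1) ≤ 2*j+1+d+1 := by omega
      have h3 : 2*(j+1-1) ≤ 2*j+1+d := by omega
      simp only [g]
      rw [ if_pos h1, if_pos h2, if_pos h3, if_pos (by omega : 1 ≤ j+1)]
      have e1 : 2*j+1+d+2 - 2*(j+1) = d+1 := by omega
      have e2 : 2*j+1+d+1 - 2*(j+1) = d := by omega
      have e3 : 2*j+1+d - 2*(j+1-1) = d+1 := by omega
      rw [e1, e2, e3]
      have e4 : j + 1 - 1 = j := by omega
      rw [e4]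
      have f1 : ((2*j+1+d+2).factorial : ℝ) = (2*j+d+3) * (2*j+1+d+1).factorial := by
        have : 2*j+1+d+2 = (2*j+1+d+1) + 1 := by omega
        rw [this, Nat.factorial_succ]; push_cast; ring_nf
      have f2 : ((2*j+1+d+1).factorial : ℝ) = (2*j+d+2) * (2*j+1+d).factorial := by
        have : 2*j+1+d+1 = (2*j+1+d) + 1 := by omega
        rw [this, Nat.factorial_succ]; push_cast; ring_nf
      have f3 : ((d+1).factorial : ℝ) = (d+1) * d.factorial := by
        rw [Nat.factorial_succ]; push_cast; ring
      have f4 : ((j+1).factorial : ℝ) = (j+1) * j.factorial := by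
        rw [Nat.factorial_succ]; push_cast; ring
      rw [f1, f2, f3, f4]
      push_cast
      field_simp
      ring
    · -- 2(j+1) = n+2, n = 2j
      obtain ⟨rfl⟩ : n = 2*j := by omega
      simp only [g]
      rw [ if_pos (by omega : 2*(j+1) ≤ 2*j+2),
        if_neg (by omega : ¬ 2*(j+1) ≤ 2*j+1),
        if_pos (by omega : 2*(j+1-1) ≤ 2*j), if_pos (by omega : 1 ≤ j+1)]
      have e1 : 2*j+2 - 2*(j+1) = 0 := by omega
      have e3 : 2*j - 2*(j+1-1) = 0 := by omega
      have e4 : j + 1 - 1 = j := by omega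
      rw [e1, e3, e4]
      have f1 : ((2*j+2).factorial : ℝ) = (2*j+2) * ((2*j+1) * (2*j).factorial) := by
        rw [show 2*j+2 = (2*j+1)+1 by omega, Nat.factorial_succ,
          show 2*j+1 = (2*j)+1 by omega, Nat.factorial_succ]
        push_cast; ring_nf
      have f4 : ((j+1).factorial : ℝ) = (j+1) * j.factorial := by
        rw [Nat.factorial_succ]; push_cast; ring
      rw [f1, f4]
      push_cast
      field_simp
      ring
    · simp only [g]
      rw [ if_neg (by omega : ¬ 2*(j+1) ≤ n+2),
        if_neg (by omega : ¬ 2*(j+1) ≤ n+1),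
        if_neg (by omega : ¬ 2*(j+1-1) ≤ n), if_pos (by omega : 1 ≤ j+1)]
      ring

lemma hermiteH_rec (x : ℝ) (n : ℕ) :
    hermiteH (n+2) x = 2*x * hermiteH (n+1) x - 2*(n+1) * hermiteH n x := by
  rw [hermiteH_eq_sum_g x (n+2) (n/2+2) (by omega),
      hermiteH_eq_sum_g x (n+1) (n/2+2) (by omega),
      hermiteH_eq_sum_g x n (n/2+1) (by omega)]
  have key : ∑ k ∈ Finset.range (n/2+2), g x (n+2) k
      = ∑ k ∈ Finset.range (n/2+2),
          (2*x * g x (n+1) k - 2*(n+1) * (if 1 ≤ k then g x n (k-1) else 0)) := by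
    exact Finset.sum_congr rfl fun k _ => g_rec x n k
  rw [key, Finset.sum_sub_distrib, ← Finset.mul_sum, ← Finset.mul_sum]
  congr 1
  rw [Finset.sum_range_succ']
  simp only [Nat.add_sub_cancel, if_pos (by omega : (1:ℕ) ≤ 0 + 1)]
  norm_num

lemma hermiteH_zero (x : ℝ) : hermiteH 0 x = 1 := by
  simp [hermiteH]

lemma hermiteH_one (x : ℝ) : hermiteH 1 x = 2*x := by
  simp [hermiteH]

noncomputable def hh (x : ℝ) (n : ℕ) : ℝ := hermiteH n x / n.factorial

lemma hh_zero (x : ℝ) : hh x 0 = 1 := by simp [hh, hermiteH_zero]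
lemma hh_one (x : ℝ) : hh x 1 = 2*x := by simp [hh, hermiteH_one]

lemma hh_rec (x : ℝ) (n : ℕ) :
    ((n+2 : ℕ) : ℝ) * hh x (n+2) = 2*x * hh x (n+1) - 2 * hh x n := by
  have fne : ∀ m : ℕ, (m.factorial : ℝ) ≠ 0 := fun m =>
    Nat.cast_ne_zero.mpr (Nat.factorial_ne_zero m)
  simp only [hh]
  rw [hermiteH_rec]
  rw [Nat.factorial_succ (n+1), Nat.factorial_succ n]
  push_cast
  field_simp
  ring

noncomputable def e (x : ℝ) (a k : ℕ) : ℝ :=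
  if k ≤ a then hh x (a - k) else 0

lemma L4 (x : ℝ) (n k : ℕ) (hk : k ≤ n + 1) :
    ((n + 1 - k : ℕ) : ℝ) * hh x (n + 1 - k)
      = 2*x * e x n k - 2 * (if k + 2 ≤ n + 1 then hh x (n - 1 - k) else 0) := by
  obtain ⟨d, hd⟩ : ∃ d, n + 1 = k + d := ⟨n + 1 - k, by omega⟩
  rcases d with _ | _ | t
  · -- k = n+1
    rw [show n + 1 - k = 0 by omega, e, if_neg (by omega : ¬ k ≤ n),
      if_neg (by omega : ¬ k + 2 ≤ n + 1)]
    simp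
  · -- k = n
    rw [show n + 1 - k = 1 by omega, e, if_pos (by omega : k ≤ n),
      show n - k = 0 by omega, if_neg (by omega : ¬ k + 2 ≤ n + 1)]
    rw [hh_one, hh_zero]
    norm_num
  · -- n+1-k = t+2
    rw [show n + 1 - k = t + 2 by omega, e, if_pos (by omega : k ≤ n),
      show n - k = t + 1 by omega, if_pos (by omega : k + 2 ≤ n + 1),
      show n - 1 - k = t by omega]
    exact hh_rec x t

lemma main (x : ℝ) : ∀ n m : ℕ,
    hermiteH (m + n) x / ((m.factorial : ℝ) * n.factorial) =
      ∑ k ∈ Finset.range (n + 1),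
        ((-2 : ℝ) ^ k / k.factorial) * e x m k * e x n k := by
  intro n
  induction n using Nat.strong_induction_on with
  | _ n ih =>
  match n with
  | 0 =>
    intro m
    simp [e, hh, Finset.sum_range_one, hermiteH_zero]
  | (n+1) =>
    intro m
    have fne : ∀ a : ℕ, (a.factorial : ℝ) ≠ 0 := fun a =>
      Nat.cast_ne_zero.mpr (Nat.factorial_ne_zero a)
    have hnz : ((n : ℝ) + 1) ≠ 0 := by positivity
    have ihn := ih n (by omega)
    set A : ℝ := ∑ k ∈ Finset.range (n + 1),
        ((-2 : ℝ) ^ k / k.factorial) * e x m k * e x n k with hA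
    set B : ℝ := ∑ j ∈ Finset.range (n + 1),
        ((-2 : ℝ) ^ j / j.factorial) * e x m (j+1) * e x n j with hB
    set C : ℝ := ∑ k ∈ Finset.range (n + 2),
        ((-2 : ℝ) ^ k / k.factorial) * e x m k *
          (if k + 2 ≤ n + 1 then hh x (n - 1 - k) else 0) with hC
    apply mul_left_cancel₀ hnz
    -- right-hand side
    have key1 : ((n : ℝ) + 1) * ∑ k ∈ Finset.range (n + 1 + 1),
          ((-2 : ℝ) ^ k / k.factorial) * e x m k * e x (n+1) k
        = 2*x*A - 2*C - 2*B := by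
      rw [Finset.mul_sum]
      have split : ∀ k ∈ Finset.range (n + 2),
          ((n : ℝ) + 1) * (((-2 : ℝ) ^ k / k.factorial) * e x m k * e x (n+1) k)
            = (((-2 : ℝ) ^ k / k.factorial) * e x m k *
                (2*x * e x n k - 2 * (if k + 2 ≤ n + 1 then hh x (n - 1 - k) else 0)))
              + (k : ℝ) * (((-2 : ℝ) ^ k / k.factorial) * e x m k * hh x (n + 1 - k)) := by
        intro k hk
        have hk' : k ≤ n + 1 := by have := Finset.mem_range.mp hk; omega
        have he : e x (n+1) k = hh x (n + 1 - k) := by rw [e, if_pos hk']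
        rw [he, ← L4 x n k hk']
        have hcast : ((n + 1 - k : ℕ) : ℝ) = (n : ℝ) + 1 - k := by
          have h1 : ((n + 1 - k : ℕ) : ℝ) = ((n+1 : ℕ) : ℝ) - (k : ℕ) := Nat.cast_sub hk'
          rw [h1]; push_cast; ring
        rw [hcast]; ring
      rw [Finset.sum_congr rfl split, Finset.sum_add_distrib]
      have part1 : ∑ k ∈ Finset.range (n + 2),
            (((-2 : ℝ) ^ k / k.factorial) * e x m k *
              (2*x * e x n k - 2 * (if k + 2 ≤ n + 1 then hh x (n - 1 - k) else 0)))
          = 2*x*A - 2*C := by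
        have expand : ∀ k ∈ Finset.range (n + 2),
            (((-2 : ℝ) ^ k / k.factorial) * e x m k *
              (2*x * e x n k - 2 * (if k + 2 ≤ n + 1 then hh x (n - 1 - k) else 0)))
            = 2*x*(((-2 : ℝ) ^ k / k.factorial) * e x m k * e x n k)
              - 2*(((-2 : ℝ) ^ k / k.factorial) * e x m k *
                  (if k + 2 ≤ n + 1 then hh x (n - 1 - k) else 0)) := by
          intro k _; ring
        rw [Finset.sum_congr rfl expand, Finset.sum_sub_distrib, ← Finset.mul_sum,
          ← Finset.mul_sum, ← hC]
        congr 2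
        rw [Finset.sum_range_succ]
        have : e x n (n+1) = 0 := by rw [e, if_neg (by omega)]
        rw [this]
        ring
      have part2 : ∑ k ∈ Finset.range (n + 2),
            (k : ℝ) * (((-2 : ℝ) ^ k / k.factorial) * e x m k * hh x (n + 1 - k))
          = -2*B := by
        rw [Finset.sum_range_succ']
        simp only [Nat.cast_zero, zero_mul, add_zero]
        rw [hB, Finset.mul_sum]
        apply Finset.sum_congr rfl
        intro j hj
        have hj' : j ≤ n := by have := Finset.mem_range.mp hj; omega
        have h1 : n + 1 - (j + 1) = n - j := by omega
        have h2 : e x n j = hh x (n - j) := by rw [e, if_pos hj']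
        rw [h1, ← h2, Nat.factorial_succ]
        push_cast
        field_simp
        ring
      rw [part1, part2]; ring
    rw [key1]
    -- left-hand side
    have L1 : ((n : ℝ) + 1) * (hermiteH (m + (n+1)) x / ((m.factorial : ℝ) * (n+1).factorial))
        = hermiteH (m + n + 1) x / ((m.factorial : ℝ) * n.factorial) := by
      rw [show m + (n+1) = m + n + 1 by omega, Nat.factorial_succ n]
      push_cast
      field_simp
    rw [L1]
    have rec' : hermiteH (m + n + 1) x
        = 2*x * hermiteH (m + n) x - 2*((m : ℝ) + (n : ℝ)) * hermiteH (m + n - 1) x := by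
      cases hmn : m + n with
      | zero =>
        have hm : m = 0 := by omega
        have hn : n = 0 := by omega
        subst hm; subst hn
        simp [hermiteH_zero, hermiteH_one]
      | succ p =>
        rw [show p + 1 + 1 = p + 2 by omega, hermiteH_rec x p,
          show p + 1 - 1 = p by omega]
        have hc : (m : ℝ) + (n : ℝ) = (p : ℝ) + 1 := by exact_mod_cast hmn
        rw [hc]
    rw [rec']
    have hAeq : hermiteH (m + n) x / ((m.factorial : ℝ) * n.factorial) = A := ihn m
    have hBeq : (m : ℝ) * (hermiteH (m + n - 1) x / ((m.factorial : ℝ) * n.factorial)) = B := by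
      cases m with
      | zero =>
        have : B = 0 := by
          rw [hB]
          apply Finset.sum_eq_zero
          intro j _
          rw [e, if_neg (by omega : ¬ j + 1 ≤ 0)]
          ring
        rw [this]
        simp
      | succ m' =>
        have he : ∀ j, e x (m'+1) (j+1) = e x m' j := by
          intro j
          by_cases hj : j ≤ m'
          · rw [e, e, if_pos (by omega), if_pos hj, show m' + 1 - (j+1) = m' - j by omega]
          · rw [e, e, if_neg (by omega), if_neg hj]
        have hBB : B = ∑ j ∈ Finset.range (n + 1),
            ((-2 : ℝ) ^ j / j.factorial) * e x m' j * e x n j := by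
          rw [hB]
          exact Finset.sum_congr rfl fun j _ => by rw [he j]
        rw [hBB, ← ihn m', show m' + 1 + n - 1 = m' + n by omega, Nat.factorial_succ m']
        push_cast
        field_simp
    have hCeq : (n : ℝ) * (hermiteH (m + n - 1) x / ((m.factorial : ℝ) * n.factorial)) = C := by
      cases n with
      | zero =>
        have : C = 0 := by
          rw [hC]
          apply Finset.sum_eq_zero
          intro k _
          rw [if_neg (by omega : ¬ k + 2 ≤ 0 + 1)]
          ring
        rw [this]
        simp
      | succ n' =>
        have hCC : C = ∑ k ∈ Finset.range (n' + 1),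
            ((-2 : ℝ) ^ k / k.factorial) * e x m k * e x n' k := by
          rw [hC]
          rw [← Finset.sum_subset (Finset.range_subset_range.mpr (by omega : n' + 1 ≤ n' + 1 + 2))]
          · apply Finset.sum_congr rfl
            intro k hk
            have hk' : k ≤ n' := by have := Finset.mem_range.mp hk; omega
            rw [if_pos (by omega : k + 2 ≤ n' + 1 + 1),
              show n' + 1 - 1 - k = n' - k by omega]
            congr 1
            rw [e, if_pos hk']
          · intro k hk1 hk2
            have hk' : n' + 1 ≤ k := by
              simp only [Finset.mem_range, not_lt] at hk2; omega
            rw [if_neg (by omega : ¬ k + 2 ≤ n' + 1 + 1)]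
            ring
        rw [hCC, ← ih n' (by omega) m, show m + (n' + 1) - 1 = m + n' by omega,
          Nat.factorial_succ n']
        push_cast
        field_simp
    rw [← hAeq, ← hBeq, ← hCeq]
    ring

end HermAux


/-- Convolution identity for the Hermite polynomials. -/
theorem hermite_convolution (m n : ℕ) (x : ℝ) :
    hermiteH (m + n) x / (m.factorial * n.factorial) =
      ∑ k ∈ Finset.range (min m n + 1),
        ((-2 : ℝ) ^ k / k.factorial) *
          (hermiteH (m - k) x / (m - k).factorial) *
          (hermiteH (n - k) x / (n - k).factorial) := by
  rw [HermAux.main x n m]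
  rw [← Finset.sum_subset (Finset.range_subset_range.mpr (by omega : min m n + 1 ≤ n + 1))]
  · apply Finset.sum_congr rfl
    intro k hk
    have hkm : k ≤ m := by have := Finset.mem_range.mp hk; omega
    have hkn : k ≤ n := by have := Finset.mem_range.mp hk; omega
    rw [HermAux.e, HermAux.e, if_pos hkm, if_pos hkn, HermAux.hh, HermAux.hh]
  · intro k hk1 hk2
    have hkm : ¬ k ≤ m := by
      simp only [Finset.mem_range, not_lt] at hk1 hk2; omega
    rw [HermAux.e, if_neg hkm]
    ring
end
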